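/- Let K^m be a cubication of radius η > 0 whose underlying set is a cube, let ℓ ∈ {0,…,m−1}, and let N^n be a compact smooth manifold embedded in ℝ^ν. If the homotopy group π_ℓ(N^n) is trivial, then for every continuous map u ∈ C^0(K^ℓ; N^n) there exists a continuous map f ∈ C^0(K^m; N^n) such that f restricted to K^ℓ equals u. -/

import Mathlib

open MeasureTheory Metric Set Filter
open scoped ENNReal Topology Pointwise

noncomputable section

/-- `ℝ^m`. -/
abbrev Euc (m : ℕ) : Type := EuclideanSpace ℝ (Fin m)

/-- The open cube `Q^m_r(a)` of center `a` and radius `r` (half of the side length). -/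
def cubeO {m : ℕ} (a : Euc m) (r : ℝ) : Set (Euc m) := {x | ∀ i, |x i - a i| < r}

/-- The closed cube of center `a` and radius `r` (half of the side length). -/
def cubeC {m : ℕ} (a : Euc m) (r : ℝ) : Set (Euc m) := {x | ∀ i, |x i - a i| ≤ r}

/-- `v` is the weak (distributional) iterated derivative of order `j` of `u` on `Ω`:
for every smooth test function `φ` compactly supported in `Ω` and all directions `d`,
`∫_Ω (D^j φ)[d] u = (-1)^j ∫_Ω φ v[d]`. -/
def IsWeakIteratedFDeriv {E F : Type*} [NormedAddCommGroup E] [NormedSpace ℝ E] [MeasureSpace E]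
    [NormedAddCommGroup F] [NormedSpace ℝ F]
    (Ω : Set E) (j : ℕ) (u : E → F)
    (v : E → ContinuousMultilinearMap ℝ (fun _ : Fin j => E) F) : Prop :=
  ∀ φ : E → ℝ, ContDiff ℝ (⊤ : ℕ∞) φ → HasCompactSupport φ → tsupport φ ⊆ Ω →
    ∀ d : Fin j → E,
      ∫ x in Ω, iteratedFDeriv ℝ j φ x d • u x
        = (-1 : ℝ) ^ j • ∫ x in Ω, φ x • v x d

/-- A map of Sobolev class `W^{k,p}(Ω; F)`: a `p`-integrable map together with a choice of its
weak derivatives up to order `k`, all of them `p`-integrable on `Ω`. -/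
structure SobolevMap (E F : Type*) [NormedAddCommGroup E] [NormedSpace ℝ E] [MeasureSpace E]
    [NormedAddCommGroup F] [NormedSpace ℝ F] (k : ℕ) (p : ℝ) (Ω : Set E) where
  toFun : E → F
  deriv : (j : ℕ) → E → ContinuousMultilinearMap ℝ (fun _ : Fin j => E) F
  memLp_toFun : MemLp toFun (ENNReal.ofReal p) (volume.restrict Ω)
  isWeakDeriv : ∀ j, 1 ≤ j → j ≤ k → IsWeakIteratedFDeriv Ω j toFun (deriv j)
  memLp_deriv : ∀ j, 1 ≤ j → j ≤ k → MemLp (deriv j) (ENNReal.ofReal p) (volume.restrict Ω)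

/-- The `W^{k,p}(Ω)` distance `‖u - g‖_{L^p} + ∑_{j=1}^k ‖D^j u - D^j g‖_{L^p}` between a
Sobolev map `u` and a (smooth) map `g`, whose derivatives are taken classically. -/
def sobDistSmooth {E F : Type*} [NormedAddCommGroup E] [NormedSpace ℝ E] [MeasureSpace E]
    [NormedAddCommGroup F] [NormedSpace ℝ F] {k : ℕ} {p : ℝ} {Ω : Set E}
    (u : SobolevMap E F k p Ω) (g : E → F) : ℝ≥0∞ :=
  eLpNorm (fun x => u.toFun x - g x) (ENNReal.ofReal p) (volume.restrict Ω)
    + ∑ j ∈ Finset.Icc 1 k,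
        eLpNorm (fun x => u.deriv j x - iteratedFDeriv ℝ j g x) (ENNReal.ofReal p)
          (volume.restrict Ω)

/-- The `W^{k,p}(Ω)` distance `‖u - v‖_{L^p} + ∑_{j=1}^k ‖D^j u - D^j v‖_{L^p}` between two
Sobolev maps. -/
def sobDist {E F : Type*} [NormedAddCommGroup E] [NormedSpace ℝ E] [MeasureSpace E]
    [NormedAddCommGroup F] [NormedSpace ℝ F] {k : ℕ} {p : ℝ} {Ω : Set E}
    (u v : SobolevMap E F k p Ω) : ℝ≥0∞ :=
  eLpNorm (fun x => u.toFun x - v.toFun x) (ENNReal.ofReal p) (volume.restrict Ω)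
    + ∑ j ∈ Finset.Icc 1 k,
        eLpNorm (fun x => u.deriv j x - v.deriv j x) (ENNReal.ofReal p) (volume.restrict Ω)

/-- A sequence of (smooth) maps `un` converges to `u` strongly in `W^{k,p}(Ω)`. -/
def TendstoSobolevSmooth {E F : Type*} [NormedAddCommGroup E] [NormedSpace ℝ E] [MeasureSpace E]
    [NormedAddCommGroup F] [NormedSpace ℝ F] {k : ℕ} {p : ℝ} {Ω : Set E}
    (un : ℕ → E → F) (u : SobolevMap E F k p Ω) : Prop :=
  Tendsto (fun n => sobDistSmooth u (un n)) atTop (𝓝 0)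

/-- `v` is a composition `u ∘ Φ` in the `W^{k,p}(Ω)` sense: there is a sequence of smooth maps
converging to `u` in `W^{k,p}(Ω)` whose compositions with `Φ` converge to `v` in `W^{k,p}(Ω)`. -/
def IsSobolevComp {E F : Type*} [NormedAddCommGroup E] [NormedSpace ℝ E] [MeasureSpace E]
    [NormedAddCommGroup F] [NormedSpace ℝ F] {k : ℕ} {p : ℝ} {Ω : Set E}
    (u : SobolevMap E F k p Ω) (Φ : E → E) (v : SobolevMap E F k p Ω) : Prop :=
  ∃ un : ℕ → E → F, (∀ i, ContDiff ℝ (⊤ : ℕ∞) (un i)) ∧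
    TendstoSobolevSmooth un u ∧ TendstoSobolevSmooth (fun i x => un i (Φ x)) v

/-- `N` is a smooth `n`-dimensional submanifold of `ℝ^ν`: around each of its points, `N` can be
smoothly straightened onto the subspace of `ℝ^ν` spanned by the first `n` coordinates. -/
def IsSmoothSubmanifold {ν : ℕ} (n : ℕ) (N : Set (Euc ν)) : Prop :=
  ∀ x ∈ N, ∃ (U V : Set (Euc ν)) (φ ψ : Euc ν → Euc ν),
    IsOpen U ∧ IsOpen V ∧ x ∈ U ∧
    ContDiffOn ℝ (⊤ : ℕ∞) φ U ∧ ContDiffOn ℝ (⊤ : ℕ∞) ψ V ∧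
    MapsTo φ U V ∧ MapsTo ψ V U ∧
    (∀ y ∈ U, ψ (φ y) = y) ∧ (∀ y ∈ V, φ (ψ y) = y) ∧
    (∀ y ∈ U, (y ∈ N ↔ ∀ i : Fin ν, n ≤ (i : ℕ) → φ y i = 0))

/-- The homotopy group `π_ℓ(N)` is trivial: every continuous map from the sphere `S^ℓ` with
values in `N` has a continuous extension to the closed unit ball `B^{ℓ+1}` with values in `N`. -/
def PiTrivial (ℓ : ℕ) {ν : ℕ} (N : Set (Euc ν)) : Prop :=
  ∀ f : Euc (ℓ + 1) → Euc ν,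
    ContinuousOn f (sphere (0 : Euc (ℓ + 1)) 1) → MapsTo f (sphere (0 : Euc (ℓ + 1)) 1) N →
    ∃ F : Euc (ℓ + 1) → Euc ν,
      ContinuousOn F (closedBall (0 : Euc (ℓ + 1)) 1) ∧
      MapsTo F (closedBall (0 : Euc (ℓ + 1)) 1) N ∧
      EqOn F f (sphere (0 : Euc (ℓ + 1)) 1)

/-- A face of the cubication of `ℝ^m` of radius `η`, given by its set `free` of free coordinates
and its center; the face is the set of points agreeing with the center outside `free` and within
distance `η` of the center in each free coordinate. -/
structure GridFace (m : ℕ) where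
  free : Finset (Fin m)
  center : Euc m

namespace GridFace

/-- The set of points of the face, for a cubication of radius `η`. -/
def toSet {m : ℕ} (η : ℝ) (F : GridFace m) : Set (Euc m) :=
  {x | (∀ i ∈ F.free, |x i - F.center i| ≤ η) ∧ ∀ i ∉ F.free, x i = F.center i}

/-- `F` is a face of the cubication of `ℝ^m` of radius `η` whose cubes are centered at the
points of `c + 2ηℤ^m`: free coordinates of the center are at cube centers (even multiples
of `η` from `c`), fixed ones at vertex coordinates (odd multiples of `η` from `c`). -/
def IsPrimal {m : ℕ} (c : Euc m) (η : ℝ) (F : GridFace m) : Prop :=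
  (∀ i ∈ F.free, ∃ z : ℤ, F.center i = c i + 2 * η * z) ∧
  ∀ i ∉ F.free, ∃ z : ℤ, F.center i = c i + η + 2 * η * z

/-- `G` is a face of the cube/face `F` (for radius `η`). -/
def IsSubface {m : ℕ} (η : ℝ) (G F : GridFace m) : Prop :=
  G.free ⊆ F.free ∧ (∀ i ∈ G.free, G.center i = F.center i) ∧
  (∀ i ∉ F.free, G.center i = F.center i) ∧
  ∀ i ∈ F.free, i ∉ G.free → G.center i = F.center i - η ∨ G.center i = F.center i + η

end GridFace

/-- The union of the sets of the faces of a family of faces. -/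
def skelUnion {m : ℕ} (η : ℝ) (S : Set (GridFace m)) : Set (Euc m) :=
  ⋃ F ∈ S, F.toSet η

/-- The skeleton of dimension `i` of a family of faces: all `i`-dimensional faces of members
of the family. -/
def skelFaces {m : ℕ} (η : ℝ) (S : Set (GridFace m)) (i : ℕ) : Set (GridFace m) :=
  {G | G.free.card = i ∧ ∃ F ∈ S, G.IsSubface η F}

/-- `S` is a subskeleton of dimension `ℓ` of the cubication of `ℝ^m` of radius `η`
with cubes centered at the points of `c + 2ηℤ^m`. -/
def IsSubskeleton {m : ℕ} (c : Euc m) (η : ℝ) (ℓ : ℕ) (S : Set (GridFace m)) : Prop :=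
  ∀ F ∈ S, F.IsPrimal c η ∧ F.free.card = ℓ

/-- The faces of the dual skeleton of dimension `d` associated with the family `S`: all
translates `σ + x - a` of `d`-dimensional faces `σ` of `S`, where `a` is the center and `x`
a vertex of a cube (so that `x - a` has all coordinates equal to `±η`). -/
def dualFaces {m : ℕ} (η : ℝ) (S : Set (GridFace m)) (d : ℕ) : Set (GridFace m) :=
  {G | ∃ F ∈ skelFaces η S d, ∃ ε : Fin m → Bool,
    G.free = F.free ∧ ∀ i, G.center i = F.center i + (if ε i then η else -η)}

/-- The set of points of the dual skeleton `T^{ℓ*}`, `ℓ* = m - ℓ - 1`, of the `ℓ`-dimensional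
skeleton of the family `S`. -/
def dualSkelSet {m : ℕ} (η : ℝ) (S : Set (GridFace m)) (ℓ : ℕ) : Set (Euc m) :=
  skelUnion η (dualFaces η S (m - ℓ - 1))

/-- The geometric support of `Φ`: the closure of the set where `Φ` differs from the identity. -/
def geomSupp {E : Type*} [TopologicalSpace E] (Φ : E → E) : Set E :=
  closure {x | Φ x ≠ x}

/-- The (absolute value of the) Jacobian determinant of `Φ`, computed with derivatives
within `s`. -/
def jacDetWithin {m : ℕ} (Φ : Euc m → Euc m) (s : Set (Euc m)) (x : Euc m) : ℝ :=
  |LinearMap.det ((fderivWithin ℝ Φ s x : Euc m →L[ℝ] Euc m) : Euc m →ₗ[ℝ] Euc m)|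

/-- The (absolute value of the) Jacobian determinant of `Φ`. -/
def jacDet {m : ℕ} (Φ : Euc m → Euc m) (x : Euc m) : ℝ :=
  |LinearMap.det ((fderiv ℝ Φ x : Euc m →L[ℝ] Euc m) : Euc m →ₗ[ℝ] Euc m)|

namespace CEP

def vlvl (η ci : ℝ) : Set ℝ := {v | ∃ z : ℤ, v = ci + η + 2*η*z}

def latt (η ci : ℝ) : Set ℝ := {v | ∃ z : ℤ, v = ci + η*z}

lemma vlvl_subset_latt {η ci : ℝ} : vlvl η ci ⊆ latt η ci := by
  rintro v ⟨z, rfl⟩; exact ⟨2*z+1, by push_cast; ring⟩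

lemma center_mem_latt {η ci : ℝ} (z : ℤ) : ci + 2*η*z ∈ latt η ci :=
  ⟨2*z, by push_cast; ring⟩

lemma int_one_le_abs_real {p q : ℤ} (h : p ≠ q) : (1:ℝ) ≤ |(p:ℝ) - q| := by
  have h1 : (1:ℤ) ≤ |p - q| := Int.one_le_abs (by omega)
  have h2 : ((|p - q| : ℤ) : ℝ) = |(p:ℝ) - q| := by push_cast; rfl
  calc (1:ℝ) = ((1:ℤ):ℝ) := by norm_num
  _ ≤ ((|p - q| : ℤ) : ℝ) := by exact_mod_cast h1
  _ = |(p:ℝ) - q| := h2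

lemma center_not_vlvl {η ci : ℝ} (hη : η ≠ 0) (z : ℤ) : ci + 2*η*z ∉ vlvl η ci := by
  rintro ⟨w, hw⟩
  have h : η * ((2*z : ℝ) - (2*w) - 1) = 0 := by push_cast; linarith [hw]
  have h2 : ((2*z - 2*w - 1 : ℤ) : ℝ) = 0 := by
    rcases mul_eq_zero.1 h with h' | h'; · exact absurd h' hη
    · push_cast; linarith
  have h3 : (2*z - 2*w - 1 : ℤ) = 0 := by exact_mod_cast h2
  omega

lemma vlvl_near_center {η ci : ℝ} (hη : 0 < η) {v : ℝ} (hv : v ∈ vlvl η ci) (z : ℤ)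
    (hz : |v - (ci + 2*η*z)| ≤ η) : v = ci + 2*η*z - η ∨ v = ci + 2*η*z + η := by
  obtain ⟨w, rfl⟩ := hv
  have he : ci + η + 2*η*w - (ci + 2*η*z) = η * (2*(w-z)+1) := by push_cast; ring
  rw [he, abs_mul, abs_of_pos hη] at hz
  have h1 : |(2*((w:ℝ)-z)+1 : ℝ)| ≤ 1 := le_of_mul_le_mul_left (by linarith) hη
  have h2 : |2*(w-z)+1| ≤ (1:ℤ) := by
    have h2' : |((2*(w-z)+1 : ℤ) : ℝ)| ≤ 1 := by push_cast; exact h1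
    exact_mod_cast h2'
  rw [abs_le] at h2
  have : w - z = 0 ∨ w - z = -1 := by omega
  rcases this with h | h
  · right; have hw : w = z := by omega
    subst hw; push_cast; ring
  · left; have hw : w = z - 1 := by omega
    subst hw; push_cast; ring

lemma center_unique {η ci : ℝ} (hη : 0 < η) {x : ℝ} (hx : x ∉ vlvl η ci) {z z' : ℤ}
    (h1 : |x - (ci + 2*η*z)| ≤ η) (h2 : |x - (ci + 2*η*z')| ≤ η) : z = z' := by
  by_contra hne
  have hzz : (1:ℝ) ≤ |(z':ℝ) - z| := int_one_le_abs_real (by omega)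
  have e1 : |(ci + 2*η*(z':ℝ)) - (ci + 2*η*z)| = 2*η*|(z':ℝ) - z| := by
    rw [show (ci + 2*η*(z':ℝ)) - (ci + 2*η*z) = 2*η*((z':ℝ) - z) by ring, abs_mul,
      abs_of_pos (by linarith)]
  have e2 : |(ci + 2*η*(z':ℝ)) - (ci + 2*η*z)| ≤ |x - (ci + 2*η*z)| + |x - (ci + 2*η*z')| := by
    have e3 : (ci + 2*η*(z':ℝ)) - (ci + 2*η*z) = (x - (ci + 2*η*z)) - (x - (ci + 2*η*z')) := by
      ring
    rw [e3]; exact abs_sub _ _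
  have key : 2*η ≤ |x - (ci + 2*η*z)| + |x - (ci + 2*η*z')| := by nlinarith
  have heq1 : |x - (ci + 2*η*(z:ℝ))| = η := le_antisymm h1 (by linarith)
  rcases (abs_eq (le_of_lt hη)).mp heq1 with h | h
  · exact hx ⟨z, by linarith⟩
  · exact hx ⟨z - 1, by push_cast; linarith⟩

lemma latt_gap {η ci : ℝ} (hη : 0 < η) (ξ : ℝ) :
    ∃ δ > 0, ∀ v ∈ latt η ci, v ≠ ξ → δ ≤ |ξ - v| := by
  have hw : ξ = ci + η * ((ξ - ci)/η) := by field_simp; ring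
  generalize hWdef : (ξ - ci)/η = w at hw
  have key : ∀ z : ℤ, |ξ - (ci + η*z)| = η * |w - z| := by
    intro z
    rw [show ξ - (ci + η*z) = η * (w - z) by rw [hw]; ring, abs_mul, abs_of_pos hη]
  by_cases hmem : ξ ∈ latt η ci
  · refine ⟨η, hη, ?_⟩
    rintro v ⟨z, rfl⟩ hne
    obtain ⟨z₀, hz₀⟩ := hmem
    have hwz : w = z₀ := by
      have : η * w = η * (z₀:ℝ) := by linarith [hw, hz₀]
      exact mul_left_cancel₀ (ne_of_gt hη) this
    rw [key]
    have hzne : z₀ ≠ z := by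
      intro h; subst h; exact hne (by rw [hz₀])
    have h1 : (1:ℝ) ≤ |w - z| := by rw [hwz]; exact int_one_le_abs_real hzne
    nlinarith
  · have hwf : w ≠ (⌊w⌋:ℝ) := by
      intro h
      exact hmem ⟨⌊w⌋, by rw [hw]; exact congrArg (fun u => ci + η * u) h⟩
    have h1 : 0 < w - ⌊w⌋ :=
      lt_of_le_of_ne (by linarith [Int.floor_le w]) (by intro h; exact hwf (by linarith))
    have h2 : 0 < (⌊w⌋:ℝ) + 1 - w := by linarith [Int.lt_floor_add_one w]
    refine ⟨η * min (w - ⌊w⌋) ((⌊w⌋:ℝ) + 1 - w), by positivity, ?_⟩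
    rintro v ⟨z, rfl⟩ _
    rw [key]
    apply mul_le_mul_of_nonneg_left _ (le_of_lt hη)
    rcases le_or_gt (z:ℝ) (⌊w⌋:ℝ) with h | h
    · have hle : w - ⌊w⌋ ≤ w - z := by linarith
      have habs : w - z ≤ |w - z| := le_abs_self _
      calc min (w - ⌊w⌋) ((⌊w⌋:ℝ) + 1 - w) ≤ w - ⌊w⌋ := min_le_left _ _
      _ ≤ |w - z| := by linarith
    · have hz' : (⌊w⌋:ℝ) + 1 ≤ z := by
        have : ⌊w⌋ + 1 ≤ z := by exact_mod_cast Int.lt_iff_add_one_le.mp (by exact_mod_cast h)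
        exact_mod_cast this
      have habs : z - w ≤ |w - z| := by rw [abs_sub_comm]; exact le_abs_self _
      calc min (w - ⌊w⌋) ((⌊w⌋:ℝ) + 1 - w) ≤ (⌊w⌋:ℝ) + 1 - w := min_le_right _ _
      _ ≤ |w - z| := by linarith

lemma vlvl_isClosed {η ci : ℝ} (hη : 0 < η) : IsClosed (vlvl η ci) := by
  rw [← isOpen_compl_iff, Metric.isOpen_iff]
  intro x hx
  obtain ⟨δ, hδ, hgap⟩ := latt_gap (ci := ci) hη x
  refine ⟨δ, hδ, ?_⟩
  intro v hv
  simp only [mem_compl_iff]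
  intro hvmem
  have hne : v ≠ x := by rintro rfl; exact hx hvmem
  have := hgap v (vlvl_subset_latt hvmem) hne
  rw [mem_ball, Real.dist_eq, abs_sub_comm] at hv
  linarith


/-! ### Part 2: faces of the cubication -/

section Part2

variable {m : ℕ} {η : ℝ} {c : Euc m} {K : Set (GridFace m)}

open Classical in
/-- coordinates of `x` that are not at a vertex level -/
noncomputable def nonvtx (η : ℝ) (c : Euc m) (x : Euc m) : Finset (Fin m) :=
  Finset.univ.filter (fun i => x i ∉ vlvl η (c i))

lemma mem_nonvtx {η : ℝ} {c x : Euc m} {i : Fin m} :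
    i ∈ nonvtx η c x ↔ x i ∉ vlvl η (c i) := by
  classical simp [nonvtx]

/-- the `d`-dimensional "skeleton set" -/
def Kset (η : ℝ) (c : Euc m) (K : Set (GridFace m)) (d : ℤ) : Set (Euc m) :=
  {x ∈ skelUnion η K | ((nonvtx η c x).card : ℤ) ≤ d}

lemma Kset_mono {d d' : ℤ} (h : d ≤ d') : Kset η c K d ⊆ Kset η c K d' :=
  fun x hx => ⟨hx.1, le_trans hx.2 h⟩

lemma Kset_subset_X {d : ℤ} : Kset η c K d ⊆ skelUnion η K := fun _ hx => hx.1

lemma mem_Kset_top {x : Euc m} (hx : x ∈ skelUnion η K) : x ∈ Kset η c K m := by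
  refine ⟨hx, ?_⟩
  have := Finset.card_le_univ (nonvtx η c x)
  simp only [Finset.card_univ, Fintype.card_fin] at this
  exact_mod_cast this

lemma mem_skelUnion {S : Set (GridFace m)} {x : Euc m} :
    x ∈ skelUnion η S ↔ ∃ F ∈ S, x ∈ F.toSet η := by
  simp [skelUnion]

variable (hK : IsSubskeleton c η m K)
include hK

lemma K_free_univ {F : GridFace m} (hF : F ∈ K) : F.free = Finset.univ := by
  exact (Finset.card_eq_iff_eq_univ F.free).mp (by rw [Fintype.card_fin]; exact (hK F hF).2)

lemma K_center {F : GridFace m} (hF : F ∈ K) (i : Fin m) :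
    ∃ z : ℤ, F.center i = c i + 2*η*(z:ℝ) :=
  (hK F hF).1.1 i (by rw [K_free_univ hK hF]; exact Finset.mem_univ i)

/-- data of a face of the skeleton -/
lemma face_spec {e : ℕ} {G : GridFace m} (hG : G ∈ skelFaces η K e) :
    G.free.card = e ∧ ∃ F ∈ K, G.IsSubface η F := hG

lemma face_center_free {e : ℕ} {G : GridFace m} (hG : G ∈ skelFaces η K e)
    {i : Fin m} (hi : i ∈ G.free) : ∃ z : ℤ, G.center i = c i + 2*η*(z:ℝ) := by
  obtain ⟨-, F, hF, hsub⟩ := hG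
  obtain ⟨z, hz⟩ := K_center hK hF i
  exact ⟨z, by rw [hsub.2.1 i hi, hz]⟩

lemma face_center_fixed {e : ℕ} {G : GridFace m} (hG : G ∈ skelFaces η K e)
    {i : Fin m} (hi : i ∉ G.free) : G.center i ∈ vlvl η (c i) := by
  obtain ⟨-, F, hF, hsub⟩ := hG
  obtain ⟨z, hz⟩ := K_center hK hF i
  have hiF : i ∈ F.free := by rw [K_free_univ hK hF]; exact Finset.mem_univ i
  rcases hsub.2.2.2 i hiF hi with h | h
  · exact ⟨z - 1, by rw [h, hz]; push_cast; ring⟩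
  · exact ⟨z, by rw [h, hz]; ring⟩

lemma face_center_latt {e : ℕ} {G : GridFace m} (hG : G ∈ skelFaces η K e)
    (i : Fin m) : G.center i ∈ latt η (c i) := by
  by_cases hi : i ∈ G.free
  · obtain ⟨z, hz⟩ := face_center_free hK hG hi
    rw [hz]; exact center_mem_latt z
  · exact vlvl_subset_latt (face_center_fixed hK hG hi)

lemma face_toSet_subset_X (hη : 0 ≤ η) {e : ℕ} {G : GridFace m}
    (hG : G ∈ skelFaces η K e) : G.toSet η ⊆ skelUnion η K := by
  obtain ⟨-, F, hF, hsub⟩ := hG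
  intro x hx
  rw [mem_skelUnion]
  refine ⟨F, hF, ?_, ?_⟩
  · intro i hiF
    by_cases hi : i ∈ G.free
    · rw [← hsub.2.1 i hi]; exact hx.1 i hi
    · rcases hsub.2.2.2 i hiF hi with h | h <;>
        rw [hx.2 i hi, h] <;> simp [abs_of_nonneg hη, hη]
  · intro i hiF
    rw [hx.2 i (fun hi => hiF (hsub.1 hi)), hsub.2.2.1 i hiF]

lemma face_nonvtx_subset {e : ℕ} {G : GridFace m} (hG : G ∈ skelFaces η K e)
    {x : Euc m} (hx : x ∈ G.toSet η) : nonvtx η c x ⊆ G.free := by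
  intro i hi
  rw [mem_nonvtx] at hi
  by_contra hif
  exact hi (hx.2 i hif ▸ face_center_fixed hK hG hif)

lemma face_toSet_subset_Kset (hη : 0 ≤ η) {e : ℕ} {G : GridFace m}
    (hG : G ∈ skelFaces η K e) : G.toSet η ⊆ Kset η c K e := by
  intro x hx
  refine ⟨face_toSet_subset_X hK hη hG hx, ?_⟩
  have := Finset.card_le_card (face_nonvtx_subset hK hG hx)
  rw [hG.1] at this
  exact_mod_cast this

/-- covering: every point of `Kset e` is in an `e`-dimensional face -/
lemma Kset_cover (hη : 0 < η) {e : ℕ} (hem : e ≤ m) {x : Euc m}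
    (hx : x ∈ Kset η c K e) : ∃ G ∈ skelFaces η K e, x ∈ G.toSet η := by
  classical
  obtain ⟨hxX, hcard⟩ := hx
  rw [mem_skelUnion] at hxX
  obtain ⟨F, hF, hxF⟩ := hxX
  have hcard' : (nonvtx η c x).card ≤ e := by exact_mod_cast hcard
  obtain ⟨S, hSsub, hScard⟩ := Finset.exists_superset_card_eq hcard'
    (by rw [Fintype.card_fin]; exact hem)
  refine ⟨⟨S, WithLp.toLp 2 (fun i => if i ∈ S then F.center i else x i)⟩, ⟨hScard, F, hF, ?_, ?_, ?_, ?_⟩, ?_, ?_⟩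
  · rw [K_free_univ hK hF]; exact Finset.subset_univ _
  · intro i hi; simp only [hi, if_pos, PiLp.toLp_apply]
  · intro i hi; exact absurd (by rw [K_free_univ hK hF]; exact Finset.mem_univ i) hi
  · intro i _ hiS
    simp only [hiS, if_neg, if_false, PiLp.toLp_apply]
    have hxv : x i ∈ vlvl η (c i) := by
      by_contra h
      exact hiS (hSsub (mem_nonvtx.mpr h))
    obtain ⟨z, hz⟩ := K_center hK hF i
    have hnear : |x i - (c i + 2*η*(z:ℝ))| ≤ η := by
      rw [← hz]; exact hxF.1 i (by rw [K_free_univ hK hF]; exact Finset.mem_univ i)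
    rcases vlvl_near_center hη hxv z hnear with h | h
    · left; rw [h, hz]
    · right; rw [h, hz]
  · intro i hi
    simp only [hi, if_pos, PiLp.toLp_apply]
    exact hxF.1 i (by rw [K_free_univ hK hF]; exact Finset.mem_univ i)
  · intro i hi
    simp only [hi, if_neg, if_false, PiLp.toLp_apply]

/-- skeleton set equality -/
lemma skelUnion_skelFaces_eq_Kset (hη : 0 < η) {e : ℕ} (hem : e ≤ m) :
    skelUnion η (skelFaces η K e) = Kset η c K e := by
  apply Set.Subset.antisymm
  · intro x hx
    rw [mem_skelUnion] at hx
    obtain ⟨G, hG, hxG⟩ := hx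
    exact face_toSet_subset_Kset hK (le_of_lt hη) hG hxG
  · intro x hx
    obtain ⟨G, hG, hxG⟩ := Kset_cover hK hη hem hx
    rw [mem_skelUnion]
    exact ⟨G, hG, hxG⟩

/-- uniqueness of the face containing a point with exactly `e` non-vertex coordinates -/
lemma face_unique (hη : 0 < η) {e : ℕ} {G₁ G₂ : GridFace m}
    (h₁ : G₁ ∈ skelFaces η K e) (h₂ : G₂ ∈ skelFaces η K e) {x : Euc m}
    (hx₁ : x ∈ G₁.toSet η) (hx₂ : x ∈ G₂.toSet η)
    (hcard : (nonvtx η c x).card = e) : G₁ = G₂ := by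
  have hfree : ∀ (G : GridFace m), G ∈ skelFaces η K e → x ∈ G.toSet η →
      G.free = nonvtx η c x := by
    intro G hG hxG
    symm
    apply Finset.eq_of_subset_of_card_le (face_nonvtx_subset hK hG hxG)
    rw [hcard, hG.1]
  have hf₁ := hfree G₁ h₁ hx₁
  have hf₂ := hfree G₂ h₂ hx₂
  have hff : G₁.free = G₂.free := by rw [hf₁, hf₂]
  obtain ⟨S₁, q₁⟩ := G₁
  obtain ⟨S₂, q₂⟩ := G₂
  simp only at hff hf₁ hf₂ ⊢
  subst hff
  congr 1
  ext i
  by_cases hi : i ∈ S₁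
  · have hxv : x i ∉ vlvl η (c i) := mem_nonvtx.mp (hf₁ ▸ hi)
    obtain ⟨z₁, hz₁⟩ := face_center_free hK h₁ hi
    obtain ⟨z₂, hz₂⟩ := face_center_free hK h₂ hi
    simp only at hz₁ hz₂
    have e₁ : |x i - (c i + 2*η*(z₁:ℝ))| ≤ η := hz₁ ▸ hx₁.1 i hi
    have e₂ : |x i - (c i + 2*η*(z₂:ℝ))| ≤ η := hz₂ ▸ hx₂.1 i hi
    have := center_unique hη hxv e₁ e₂
    rw [hz₁, hz₂, this]
  · exact (hx₁.2 i hi).symm.trans (hx₂.2 i hi)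

end Part2


/-! ### Part 3: geometry helpers, locality, corner, sweep -/

section Part3

variable {m : ℕ} {η : ℝ} {c : Euc m} {K : Set (GridFace m)}

lemma euc_coord_le_norm (v : Euc m) (i : Fin m) : |v i| ≤ ‖v‖ := by
  rw [EuclideanSpace.norm_eq]
  rw [show |v i| = Real.sqrt (|v i|^2) by rw [Real.sqrt_sq_eq_abs, abs_abs]]
  apply Real.sqrt_le_sqrt
  have h1 : |v i|^2 = ‖v i‖^2 := by rw [Real.norm_eq_abs]
  rw [h1]
  exact Finset.single_le_sum (f := fun j => ‖v j‖^2) (fun j _ => sq_nonneg _)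
    (Finset.mem_univ i)

lemma euc_dist_coord (x y : Euc m) (i : Fin m) : |x i - y i| ≤ dist x y := by
  rw [dist_eq_norm]
  exact euc_coord_le_norm (x - y) i

lemma euc_norm_le_sqrt (v : Euc m) {b : ℝ} (hb : 0 ≤ b) (h : ∀ i, |v i| ≤ b) :
    ‖v‖ ≤ b * Real.sqrt m := by
  rw [EuclideanSpace.norm_eq]
  have h1 : ∑ i, ‖v i‖^2 ≤ ∑ _i : Fin m, b^2 := by
    apply Finset.sum_le_sum
    intro i _
    rw [Real.norm_eq_abs]
    exact pow_le_pow_left₀ (abs_nonneg _) (h i) 2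
  rw [Finset.sum_const, Finset.card_univ, Fintype.card_fin, nsmul_eq_mul] at h1
  calc Real.sqrt (∑ i, ‖v i‖^2) ≤ Real.sqrt ((m:ℝ) * b^2) := Real.sqrt_le_sqrt h1
  _ = b * Real.sqrt m := by
    rw [show (m:ℝ) * b^2 = b^2 * m by ring, Real.sqrt_mul (sq_nonneg b),
      Real.sqrt_sq hb]

lemma cubeC_isClosed (a : Euc m) (r : ℝ) : IsClosed (cubeC a r) := by
  have : cubeC a r = ⋂ i, {x : Euc m | |x i - a i| ≤ r} := by
    ext x; simp [cubeC, mem_iInter]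
  rw [this]
  refine isClosed_iInter fun i => ?_
  have h : Continuous fun x : Euc m => x i := PiLp.continuous_apply 2 _ i
  exact isClosed_le ((h.sub continuous_const).abs) continuous_const

lemma cubeC_isCompact (a : Euc m) (r : ℝ) : IsCompact (cubeC a r) := by
  rcases le_or_gt 0 r with hr | hr
  · apply Metric.isCompact_of_isClosed_isBounded (cubeC_isClosed a r)
    rw [Metric.isBounded_iff_subset_closedBall a]
    refine ⟨r * Real.sqrt m, fun x hx => ?_⟩
    rw [mem_closedBall, dist_eq_norm]
    exact euc_norm_le_sqrt _ hr (fun i => hx i)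
  · rcases Nat.eq_zero_or_pos m with hm | hm
    · have : (Set.univ : Set (Euc m)).Subsingleton := by
        intro x _ y _
        ext i
        exact absurd i.2 (by omega)
      have hsub : (cubeC a r).Subsingleton := fun x hx y hy => this (mem_univ x) (mem_univ y)
      exact hsub.isCompact
    · convert isCompact_empty
      ext x
      simp only [mem_empty_iff_false, iff_false]
      intro hx
      have := hx ⟨0, hm⟩
      have := abs_nonneg (x ⟨0, hm⟩ - a ⟨0, hm⟩)
      linarith

lemma Kset_isClosed (hη : 0 < η) {a : Euc m} {r : ℝ}
    (hX : skelUnion η K = cubeC a r) (d : ℤ) : IsClosed (Kset η c K d) := by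
  classical
  have heq : Kset η c K d = cubeC a r ∩
      ⋃ (S : {S : Finset (Fin m) // (S.card : ℤ) ≤ d}),
        ⋂ (i : Fin m) (_ : i ∉ S.1), {x : Euc m | x i ∈ vlvl η (c i)} := by
    ext x
    constructor
    · rintro ⟨hxX, hcard⟩
      refine ⟨hX ▸ hxX, ?_⟩
      rw [mem_iUnion]
      refine ⟨⟨nonvtx η c x, hcard⟩, ?_⟩
      simp only [mem_iInter]
      intro i hi
      by_contra h
      exact hi (mem_nonvtx.mpr h)
    · rintro ⟨hxX, hmem⟩
      rw [mem_iUnion] at hmem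
      obtain ⟨⟨S, hS⟩, hm⟩ := hmem
      simp only [mem_iInter] at hm
      refine ⟨hX ▸ hxX, ?_⟩
      have hsub : nonvtx η c x ⊆ S := by
        intro i hi
        by_contra h
        exact (mem_nonvtx.mp hi) (hm i h)
      calc ((nonvtx η c x).card : ℤ) ≤ (S.card : ℤ) := by
            exact_mod_cast Finset.card_le_card hsub
      _ ≤ d := hS
  rw [heq]
  apply (cubeC_isClosed a r).inter
  apply isClosed_iUnion_of_finite
  intro S
  refine isClosed_iInter fun i => isClosed_iInter fun _ => ?_
  exact IsClosed.preimage (PiLp.continuous_apply 2 _ i) (vlvl_isClosed hη)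

lemma Kset_isCompact (hη : 0 < η) {a : Euc m} {r : ℝ}
    (hX : skelUnion η K = cubeC a r) (d : ℤ) : IsCompact (Kset η c K d) := by
  apply (cubeC_isCompact a r).of_isClosed_subset (Kset_isClosed hη hX d)
  intro x hx
  exact hX ▸ hx.1

variable (hK : IsSubskeleton c η m K)
include hK

/-- Locality: near any point, only faces containing the point matter. -/
lemma locality (hη : 0 < η) (hm : 0 < m) (x : Euc m) :
    ∃ ε > 0, ∀ (e : ℕ) (G : GridFace m), G ∈ skelFaces η K e →
      ∀ y ∈ G.toSet η, dist x y < ε → x ∈ G.toSet η := by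
  have : ∀ i : Fin m, ∃ δ > 0, ∀ v ∈ latt η (c i), v ≠ x i → δ ≤ |x i - v| :=
    fun i => latt_gap hη (x i)
  choose δ hδpos hδ using this
  have hne : Nonempty (Fin m) := ⟨⟨0, hm⟩⟩
  set ε := Finset.univ.inf' Finset.univ_nonempty δ with hεdef
  have hεpos : 0 < ε := by
    rw [hεdef, Finset.lt_inf'_iff]
    exact fun i _ => hδpos i
  have hεle : ∀ i, ε ≤ δ i := fun i => Finset.inf'_le _ (Finset.mem_univ i)
  refine ⟨ε, hεpos, ?_⟩
  intro e G hG y hy hdist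
  have hq : ∀ i, G.center i ∈ latt η (c i) := face_center_latt hK hG
  constructor
  · intro i hi
    have h1 : |y i - G.center i| ≤ η := hy.1 i hi
    have h2 : |x i - y i| < ε := lt_of_le_of_lt (euc_dist_coord x y i) hdist
    by_contra hgt
    push_neg at hgt
    have h3 : |x i - G.center i| ≤ |x i - y i| + |y i - G.center i| := by
      rw [show x i - G.center i = (x i - y i) + (y i - G.center i) from by ring]
      exact abs_add_le _ _
    have h4 : |x i - G.center i| < η + ε := by
      have := hεle i; linarith
    obtain ⟨z, hz⟩ := hq i
    rcases lt_or_ge (G.center i) (x i) with hlt | hle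
    · -- x i > q : consider v = q + η
      have hxq : η < x i - G.center i := by
        rwa [abs_of_pos (by linarith)] at hgt
      have hv : G.center i + η ∈ latt η (c i) := ⟨z + 1, by rw [hz]; push_cast; ring⟩
      have hvne : G.center i + η ≠ x i := by
        intro h; rw [← h] at hxq; linarith
      have := hδ i _ hv hvne
      have habs : |x i - (G.center i + η)| = x i - G.center i - η := by
        rw [abs_of_pos (by linarith)]; ring
      rw [habs] at this
      have h5 : x i - G.center i < η + ε := by
        rwa [abs_of_pos (by linarith)] at h4
      have := hεle i
      linarith
    · -- x i ≤ q, in fact x i < q - η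
      have hxq : η < G.center i - x i := by
        rw [abs_sub_comm] at hgt
        rwa [abs_of_nonneg (by linarith)] at hgt
      have hv : G.center i - η ∈ latt η (c i) := ⟨z - 1, by rw [hz]; push_cast; ring⟩
      have hvne : G.center i - η ≠ x i := by
        intro h; rw [← h] at hxq; linarith
      have := hδ i _ hv hvne
      have habs : |x i - (G.center i - η)| = G.center i - x i - η := by
        rw [abs_sub_comm, abs_of_pos (by linarith)]; ring
      rw [habs] at this
      have h5 : G.center i - x i < η + ε := by
        rw [abs_sub_comm] at h4
        rwa [abs_of_pos (by linarith)] at h4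
      have := hεle i
      linarith
  · intro i hi
    have h1 : y i = G.center i := hy.2 i hi
    have h2 : |x i - y i| < ε := lt_of_le_of_lt (euc_dist_coord x y i) hdist
    by_contra hne'
    have : G.center i ≠ x i := fun h => hne' h.symm
    have := hδ i _ (hq i) this
    rw [← h1] at this
    have := hεle i
    linarith

/-- finitely many faces contain a given point -/
lemma faces_at_finite (hη : 0 < η) (e : ℕ) (x : Euc m) :
    {G : GridFace m | G ∈ skelFaces η K e ∧ x ∈ G.toSet η}.Finite := by
  classical
  apply Set.Finite.of_finite_image
    (f := fun G : GridFace m => (G.free, fun i => decide (x i < G.center i)))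
  · exact Set.toFinite _
  · intro G₁ h₁ G₂ h₂ heq
    rw [Prod.mk.injEq] at heq
    obtain ⟨hfree, hcent⟩ := heq
    have key : ∀ i ∈ G₁.free, G₁.center i = G₂.center i := by
      intro i hi
      have hi₂ : i ∈ G₂.free := hfree ▸ hi
      obtain ⟨z₁, hz₁⟩ := face_center_free hK h₁.1 hi
      obtain ⟨z₂, hz₂⟩ := face_center_free hK h₂.1 hi₂
      have e₁ : |x i - G₁.center i| ≤ η := h₁.2.1 i hi
      have e₂ : |x i - G₂.center i| ≤ η := h₂.2.1 i hi₂
      have hdec : (x i < G₁.center i) ↔ (x i < G₂.center i) := by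
        constructor <;> intro h
        · have := congrFun hcent i
          simp only [decide_eq_decide] at this
          exact this.mp h
        · have := congrFun hcent i
          simp only [decide_eq_decide] at this
          exact this.mpr h
      have main : ∀ (p q : ℝ) (zp zq : ℤ), p = c i + 2*η*zp → q = c i + 2*η*zq →
          |x i - p| ≤ η → |x i - q| ≤ η → ((x i < p) ↔ (x i < q)) → p ≤ q → p = q := by
        intro p q zp zq hp hq hxp hxq hiff hpq
        by_contra hne'
        have hlt : p < q := lt_of_le_of_ne hpq hne'
        have hzz : zp < zq := by
          have h1' : 2*η*(zp:ℝ) < 2*η*(zq:ℝ) := by rw [hp, hq] at hlt; linarith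
          have h2 : (zp:ℝ) < zq := by
            have h2η : (0:ℝ) < 2*η := by linarith
            exact lt_of_mul_lt_mul_left (by linarith [h1']) (le_of_lt h2η)
          exact_mod_cast h2
        have hgap : 2*η ≤ q - p := by
          rw [hp, hq]
          have hzz' : (1:ℤ) ≤ zq - zp := by omega
          have : (1:ℝ) ≤ (zq:ℝ) - zp := by exact_mod_cast hzz'
          nlinarith
        have hb1 : x i ≤ p + η := by have := (abs_le.mp hxp).2; linarith
        have hb2 : q - η ≤ x i := by have := (abs_le.mp hxq).1; linarith
        have hxltq : x i < q := by linarith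
        have hxgep : ¬ (x i < p) := by push_neg; linarith
        exact hxgep (hiff.mpr hxltq)
      obtain ⟨z₁, hz₁'⟩ := face_center_free hK h₁.1 hi
      obtain ⟨z₂, hz₂'⟩ := face_center_free hK h₂.1 hi₂
      rcases le_total (G₁.center i) (G₂.center i) with h | h
      · exact main _ _ z₁ z₂ hz₁' hz₂' e₁ e₂ hdec h
      · exact (main _ _ z₂ z₁ hz₂' hz₁' e₂ e₁ hdec.symm h).symm
    obtain ⟨S₁, q₁⟩ := G₁
    obtain ⟨S₂, q₂⟩ := G₂
    simp only at hfree key ⊢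
    subst hfree
    congr 1
    ext i
    by_cases hi : i ∈ S₁
    · exact key i hi
    · exact (h₁.2.2 i hi).symm.trans (h₂.2.2 i hi)

omit hK

/-- alignment of the corner of the cube -/
lemma corner_vlvl (hη : 0 < η) (hm : 0 < m) {a : Euc m} {r : ℝ}
    (hK : IsSubskeleton c η m K)
    (hX : skelUnion η K = cubeC a r) (hne : (skelUnion η K).Nonempty)
    (hr : 0 ≤ r) (i : Fin m) : a i - r ∈ vlvl η (c i) := by
  classical
  set w : Euc m := WithLp.toLp 2 (fun j => if j = i then a i - r else a j) with hwdef
  have hw : w ∈ cubeC a r := by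
    intro j
    by_cases hj : j = i
    · subst hj
      simp only [hwdef, if_pos rfl, PiLp.toLp_apply, ↓reduceIte]
      rw [show a j - r - a j = -r by ring, abs_neg, abs_of_nonneg hr]
    · simp only [hwdef, if_neg hj, PiLp.toLp_apply]
      rw [sub_self, abs_zero]
      exact hr
  have hwX : w ∈ skelUnion η K := hX ▸ hw
  rw [mem_skelUnion] at hwX
  obtain ⟨F₁, hF₁, hwF⟩ := hwX
  obtain ⟨z, hz⟩ := K_center hK hF₁ i
  have h1 : |(a i - r) - F₁.center i| ≤ η := by
    have := hwF.1 i (by rw [K_free_univ hK hF₁]; exact Finset.mem_univ i)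
    simpa [hwdef, PiLp.toLp_apply] using this
  -- the point y = center - η e_i is in X
  set y : Euc m := WithLp.toLp 2 (fun j => if j = i then F₁.center i - η else F₁.center j) with hydef
  have hyF : y ∈ F₁.toSet η := by
    constructor
    · intro j _
      by_cases hj : j = i
      · subst hj
        simp only [hydef, if_pos rfl, PiLp.toLp_apply, ↓reduceIte]
        rw [show F₁.center j - η - F₁.center j = -η by ring, abs_neg, abs_of_pos hη]
      · simp only [hydef, if_neg hj, sub_self, abs_zero, PiLp.toLp_apply]
        exact le_of_lt hη
    · intro j hj
      exact absurd (by rw [K_free_univ hK hF₁]; exact Finset.mem_univ j) hj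
  have hyX : y ∈ cubeC a r := hX ▸ (mem_skelUnion.mpr ⟨F₁, hF₁, hyF⟩)
  have hyi : y i = F₁.center i - η := by simp [hydef]
  have h2 : a i - r ≤ F₁.center i - η := by
    have h := (abs_le.mp (hyX i)).1
    rw [hyi] at h
    linarith
  have h3 : F₁.center i - η ≤ a i - r := by
    have h := (abs_le.mp h1).1
    linarith
  have : a i - r = F₁.center i - η := le_antisymm h2 h3
  rw [this, hz]
  exact ⟨z - 1, by push_cast; ring⟩

/-! ### the sweep homotopy -/

def sweep (a : Euc m) (r : ℝ) (x : Euc m) (t : ℝ) : Euc m :=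
  WithLp.toLp 2 (fun i => max (a i - r) (min (x i) ((a i - r) + (2*r) * (((i:ℕ):ℝ) + 1 - t * m))))

lemma sweep_continuous (a : Euc m) (r : ℝ) :
    Continuous fun p : Euc m × ℝ => sweep a r p.1 p.2 := by
  refine (PiLp.continuous_toLp 2 _).comp ?_
  apply continuous_pi
  intro i
  apply continuous_const.max
  apply Continuous.min
  · exact (PiLp.continuous_apply 2 _ i).comp continuous_fst
  · exact continuous_const.add (continuous_const.mul
      (continuous_const.sub (continuous_snd.mul continuous_const)))

lemma sweep_mem_cube {a : Euc m} {r : ℝ} (hr : 0 ≤ r) {x : Euc m}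
    (hx : x ∈ cubeC a r) (t : ℝ) : sweep a r x t ∈ cubeC a r := by
  intro i
  have hxi := abs_le.mp (hx i)
  have hlo : a i - r ≤ sweep a r x t i := le_max_left _ _
  have hhi : sweep a r x t i ≤ x i := by
    apply max_le
    · linarith
    · exact min_le_left _ _
  rw [abs_le]
  constructor <;> linarith

lemma sweep_zero {a : Euc m} {r : ℝ} (hr : 0 ≤ r) {x : Euc m} (hx : x ∈ cubeC a r) :
    sweep a r x 0 = x := by
  ext i
  have hxi := abs_le.mp (hx i)
  have h1 : x i ≤ (a i - r) + (2*r) * (((i:ℕ):ℝ) + 1 - 0 * m) := by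
    have : (1:ℝ) ≤ ((i:ℕ):ℝ) + 1 - 0 * m := by
      have : (0:ℝ) ≤ ((i:ℕ):ℝ) := Nat.cast_nonneg _
      linarith
    nlinarith
  simp only [sweep, PiLp.toLp_apply]
  rw [min_eq_left h1, max_eq_right (by linarith)]

lemma sweep_one {a : Euc m} {r : ℝ} (hr : 0 ≤ r) {x : Euc m} (hx : x ∈ cubeC a r) :
    sweep a r x 1 = (WithLp.toLp 2 (fun i => a i - r) : Euc m) := by
  ext i
  have hxi := abs_le.mp (hx i)
  have h1 : ((i:ℕ):ℝ) + 1 - 1 * m ≤ 0 := by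
    have : ((i:ℕ):ℝ) + 1 ≤ m := by exact_mod_cast i.2
    linarith
  have h2 : (a i - r) + (2*r) * (((i:ℕ):ℝ) + 1 - 1 * m) ≤ a i - r := by nlinarith
  simp only [sweep, PiLp.toLp_apply]
  rw [max_eq_left]
  exact le_trans (min_le_right _ _) h2

lemma sweep_mem_Kset (hη : 0 < η) {a : Euc m} {r : ℝ} (hr : 0 ≤ r)
    (hX : skelUnion η K = cubeC a r)
    (hcor : ∀ i, a i - r ∈ vlvl η (c i))
    {d : ℤ} {x : Euc m} (hx : x ∈ Kset η c K d) (t : ℝ) :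
    sweep a r x t ∈ Kset η c K (d+1) := by
  classical
  obtain ⟨hxX, hcard⟩ := hx
  have hxC : x ∈ cubeC a r := hX ▸ hxX
  refine ⟨hX ▸ sweep_mem_cube hr hxC t, ?_⟩
  set T : Finset (Fin m) :=
    Finset.univ.filter (fun i => ((i:ℕ):ℝ) < t*m ∧ t*m < ((i:ℕ):ℝ)+1) with hT
  have hTcard : T.card ≤ 1 := by
    rw [Finset.card_le_one]
    intro i hi j hj
    rw [hT, Finset.mem_filter] at hi hj
    obtain ⟨-, hi1, hi2⟩ := hi
    obtain ⟨-, hj1, hj2⟩ := hj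
    have h1 : (i:ℕ) ≤ (j:ℕ) := by
      have : ((i:ℕ):ℝ) < ((j:ℕ):ℝ) + 1 := by linarith
      have : (i:ℕ) < (j:ℕ) + 1 := by exact_mod_cast this
      omega
    have h2 : (j:ℕ) ≤ (i:ℕ) := by
      have : ((j:ℕ):ℝ) < ((i:ℕ):ℝ) + 1 := by linarith
      have : (j:ℕ) < (i:ℕ) + 1 := by exact_mod_cast this
      omega
    exact Fin.ext (le_antisymm h1 h2)
  have hsub : nonvtx η c (sweep a r x t) ⊆ nonvtx η c x ∪ T := by
    intro i hi
    rw [mem_nonvtx] at hi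
    rw [Finset.mem_union]
    by_cases hiT : i ∈ T
    · exact Or.inr hiT
    · left
      rw [mem_nonvtx]
      rw [hT, Finset.mem_filter] at hiT
      push_neg at hiT
      have hiT' := hiT (Finset.mem_univ i)
      rcases le_or_gt (t*m) ((i:ℕ):ℝ) with hcase | hcase
      · -- untouched : sweep = x i
        have hxi := abs_le.mp (hxC i)
        have hg : x i ≤ (a i - r) + (2*r) * (((i:ℕ):ℝ) + 1 - t * m) := by
          have h1 : (1:ℝ) ≤ ((i:ℕ):ℝ) + 1 - t * m := by linarith
          nlinarith
        have : sweep a r x t i = x i := by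
          simp only [sweep, PiLp.toLp_apply]
          rw [min_eq_left hg, max_eq_right (by linarith)]
        rwa [this] at hi
      · -- done : sweep = a i - r  (vertex level), contradiction
        have hge : ((i:ℕ):ℝ) + 1 ≤ t*m := hiT' hcase
        have h2 : (a i - r) + (2*r) * (((i:ℕ):ℝ) + 1 - t * m) ≤ a i - r := by nlinarith
        have : sweep a r x t i = a i - r := by
          simp only [sweep, PiLp.toLp_apply]
          rw [max_eq_left (le_trans (min_le_right _ _) h2)]
        rw [this] at hi
        exact absurd (hcor i) hi
  calc ((nonvtx η c (sweep a r x t)).card : ℤ)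
      ≤ ((nonvtx η c x ∪ T).card : ℤ) := by exact_mod_cast Finset.card_le_card hsub
  _ ≤ ((nonvtx η c x).card : ℤ) + (T.card : ℤ) := by exact_mod_cast Finset.card_union_le _ _
  _ ≤ d + 1 := by
      have : (T.card : ℤ) ≤ 1 := by exact_mod_cast hTcard
      linarith

end Part3


/-! ### Part 4: radial structure of a face -/

section Part4

variable {m : ℕ} {η : ℝ} {c : Euc m} {K : Set (GridFace m)}

lemma continuous_finset_sup' {ι X : Type*} [TopologicalSpace X] {s : Finset ι}
    (hs : s.Nonempty) {f : ι → X → ℝ} (hf : ∀ i, Continuous (f i)) :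
    Continuous fun x => s.sup' hs fun i => f i x := by
  induction hs using Finset.Nonempty.cons_induction with
  | singleton a => simpa using hf a
  | cons a s ha hs ih =>
      have heq : (fun x => (Finset.cons a s ha).sup' (Finset.cons_nonempty ha) fun i => f i x)
          = fun x => (f a x) ⊔ (s.sup' hs fun i => f i x) := by
        funext x
        exact Finset.sup'_cons hs (fun i => f i x)
      rw [heq]
      exact (hf a).sup ih

lemma sup'_const_mul {ι : Type*} {s : Finset ι} (hs : s.Nonempty) (f : ι → ℝ) {k : ℝ}
    (hk : 0 ≤ k) : s.sup' hs (fun i => k * f i) = k * s.sup' hs f := by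
  apply le_antisymm
  · apply Finset.sup'_le
    intro i hi
    exact mul_le_mul_of_nonneg_left (Finset.le_sup' f hi) hk
  · obtain ⟨i₀, hi₀, heq⟩ := Finset.exists_mem_eq_sup' hs f
    rw [heq]
    exact Finset.le_sup' (fun i => k * f i) hi₀

/-- sup-distance to the center of a face, over free coordinates -/
def Mfun (G : GridFace m) (h : G.free.Nonempty) (x : Euc m) : ℝ :=
  G.free.sup' h (fun i => |x i - G.center i|)

lemma Mfun_continuous (G : GridFace m) (h : G.free.Nonempty) :
    Continuous (Mfun G h) := by
  apply continuous_finset_sup' h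
  intro i
  have hc : Continuous fun x : Euc m => x i := PiLp.continuous_apply 2 _ i
  exact (hc.sub continuous_const).abs

lemma Mfun_nonneg (G : GridFace m) (h : G.free.Nonempty) (x : Euc m) :
    0 ≤ Mfun G h x := by
  unfold Mfun
  obtain ⟨i, hi⟩ := h
  exact le_trans (abs_nonneg (x i - G.center i))
    (Finset.le_sup' (fun i => |x i - G.center i|) hi)

lemma Mfun_le (G : GridFace m) (h : G.free.Nonempty) {x : Euc m}
    (hx : x ∈ G.toSet η) : Mfun G h x ≤ η :=
  Finset.sup'_le _ _ fun i hi => hx.1 i hi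

lemma Mfun_center (G : GridFace m) (h : G.free.Nonempty) :
    Mfun G h G.center = 0 := by
  apply le_antisymm
  · apply Finset.sup'_le
    intro i _
    rw [sub_self, abs_zero]
  · exact Mfun_nonneg G h _

lemma Mfun_pos (G : GridFace m) (h : G.free.Nonempty) {x : Euc m}
    (hx : x ∈ G.toSet η) (hne : x ≠ G.center) : 0 < Mfun G h x := by
  have : ∃ i, x i ≠ G.center i := by
    by_contra hc
    push_neg at hc
    exact hne (PiLp.ext hc)
  obtain ⟨i, hi⟩ := this
  have hifree : i ∈ G.free := by
    by_contra hif
    exact hi (hx.2 i hif)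
  calc 0 < |x i - G.center i| := abs_pos.mpr (sub_ne_zero.mpr hi)
  _ ≤ Mfun G h x := Finset.le_sup' (fun i => |x i - G.center i|) hifree

/-- the sup-radial projection to the boundary of a face -/
def bproj (η : ℝ) (G : GridFace m) (h : G.free.Nonempty) (x : Euc m) : Euc m :=
  G.center + (η / Mfun G h x) • (x - G.center)

lemma bproj_apply (G : GridFace m) (h : G.free.Nonempty) (x : Euc m) (i : Fin m) :
    bproj η G h x i = G.center i + (η / Mfun G h x) * (x i - G.center i) := rfl

lemma bproj_continuousOn (G : GridFace m) (h : G.free.Nonempty) :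
    ContinuousOn (bproj η G h) {x | Mfun G h x ≠ 0} := by
  apply ContinuousOn.add continuousOn_const
  apply ContinuousOn.fun_smul
  · exact ContinuousOn.div continuousOn_const ((Mfun_continuous G h).continuousOn)
      fun x hx => hx
  · exact (continuous_id.sub continuous_const).continuousOn

variable (hK : IsSubskeleton c η m K)
include hK

/-- on a face, a coordinate at distance η from the center is at a vertex level -/
lemma face_vertex_coord (hη : 0 < η) {e : ℕ} {G : GridFace m} (hG : G ∈ skelFaces η K e)
    {i : Fin m} (hi : i ∈ G.free) {x : Euc m} (hix : |x i - G.center i| = η) :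
    x i ∈ vlvl η (c i) := by
  obtain ⟨z, hz⟩ := face_center_free hK hG hi
  rcases (abs_eq (le_of_lt hη)).mp hix with hcase | hcase
  · exact ⟨z, by rw [hz] at hcase; linarith⟩
  · exact ⟨z - 1, by rw [hz] at hcase; push_cast; linarith⟩

/-- conversely: on a face, a vertex-level free coordinate is at distance η -/
lemma face_coord_vertex (hη : 0 < η) {e : ℕ} {G : GridFace m} (hG : G ∈ skelFaces η K e)
    {i : Fin m} (hi : i ∈ G.free) {x : Euc m} (hx : x ∈ G.toSet η)
    (hv : x i ∈ vlvl η (c i)) : |x i - G.center i| = η := by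
  obtain ⟨z, hz⟩ := face_center_free hK hG hi
  have h1 : |x i - (c i + 2*η*(z:ℝ))| ≤ η := hz ▸ hx.1 i hi
  rcases vlvl_near_center hη hv z h1 with hcase | hcase
  · rw [hcase, hz]; rw [show c i + 2*η*(z:ℝ) - η - (c i + 2*η*(z:ℝ)) = -η by ring,
      abs_neg, abs_of_pos hη]
  · rw [hcase, hz]; rw [show c i + 2*η*(z:ℝ) + η - (c i + 2*η*(z:ℝ)) = η by ring,
      abs_of_pos hη]

/-- a point of a face lying in the lower skeleton has sup-distance exactly η -/
lemma Mfun_eq_of_lower (hη : 0 < η) {e : ℕ} {G : GridFace m} (hG : G ∈ skelFaces η K e)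
    (h : G.free.Nonempty) {x : Euc m} (hx : x ∈ G.toSet η)
    (hlow : x ∈ Kset η c K ((e:ℤ) - 1)) : Mfun G h x = η := by
  have hsub : nonvtx η c x ⊆ G.free := face_nonvtx_subset hK hG hx
  have hcard : (nonvtx η c x).card < G.free.card := by
    have h1 : ((nonvtx η c x).card : ℤ) ≤ (e:ℤ) - 1 := hlow.2
    have h2 : (nonvtx η c x).card < e := by omega
    rw [hG.1]; exact h2
  have hex : ∃ i ∈ G.free, i ∉ nonvtx η c x := by
    by_contra hc
    push_neg at hc
    have : G.free ⊆ nonvtx η c x := hc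
    exact absurd (Finset.card_le_card this) (by omega)
  obtain ⟨i, hifree, hinv⟩ := hex
  have hv : x i ∈ vlvl η (c i) := by
    by_contra hvv
    exact hinv (mem_nonvtx.mpr hvv)
  have heta : |x i - G.center i| = η := face_coord_vertex hK hη hG hifree hx hv
  apply le_antisymm (Mfun_le G h hx)
  calc η = |x i - G.center i| := heta.symm
  _ ≤ Mfun G h x := Finset.le_sup' (fun i => |x i - G.center i|) hifree

end Part4


/-! ### Part 5: gluing helpers and the cone extension on a face -/

section Part5

variable {m : ℕ} {η : ℝ} {c : Euc m} {K : Set (GridFace m)} {ν : ℕ}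

lemma cwa_of_cover {X Y : Type*} [PseudoMetricSpace X] [TopologicalSpace Y]
    {f : X → Y} {s : Set X} {p : X} {ι : Type*} {t : Finset ι} {S : ι → Set X}
    {ρ : ℝ} (hρ : 0 < ρ) (hcov : s ∩ ball p ρ ⊆ ⋃ i ∈ t, S i)
    (hcwa : ∀ i ∈ t, ContinuousWithinAt f (S i) p) :
    ContinuousWithinAt f s p := by
  classical
  have main : ∀ (u : Finset ι), (∀ i ∈ u, ContinuousWithinAt f (S i) p) →
      ContinuousWithinAt f (⋃ i ∈ u, S i) p := by
    intro u
    induction u using Finset.induction with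
    | empty =>
        intro _
        simp only [Finset.notMem_empty, iUnion_of_empty, iUnion_empty]
        unfold ContinuousWithinAt
        rw [nhdsWithin_empty]
        exact tendsto_bot
    | @insert a t' hnot ih =>
        intro hcwa'
        rw [Finset.set_biUnion_insert]
        exact (hcwa' a (Finset.mem_insert_self a t')).union
          (ih fun i hi => hcwa' i (Finset.mem_insert_of_mem hi))
  have h1 : ContinuousWithinAt f (⋃ i ∈ t, S i) p := main t hcwa
  have h2 : ContinuousWithinAt f (s ∩ ball p ρ) p := h1.mono hcov
  rw [← continuousWithinAt_inter (ball_mem_nhds p hρ)]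
  exact h2

lemma stay_nonvtx (hη : 0 < η) (hm : 0 < m) (c : Euc m) (x : Euc m) :
    ∃ ρ > 0, ∀ y : Euc m, dist x y < ρ → nonvtx η c x ⊆ nonvtx η c y := by
  have : ∀ i : Fin m, ∃ δ > 0, ∀ v ∈ latt η (c i), v ≠ x i → δ ≤ |x i - v| :=
    fun i => latt_gap hη (x i)
  choose δ hδpos hδ using this
  have hne : Nonempty (Fin m) := ⟨⟨0, hm⟩⟩
  refine ⟨Finset.univ.inf' Finset.univ_nonempty δ, by
    rw [gt_iff_lt, Finset.lt_inf'_iff]; exact fun i _ => hδpos i, ?_⟩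
  intro y hdist i hi
  rw [mem_nonvtx] at hi ⊢
  intro hyv
  have h2 : |x i - y i| < δ i := by
    have := euc_dist_coord x y i
    have := Finset.inf'_le δ (Finset.mem_univ i)
    linarith [lt_of_le_of_lt (euc_dist_coord x y i) hdist]
  have hyne : y i ≠ x i := by
    intro h; exact hi (h ▸ hyv)
  have := hδ i (y i) (vlvl_subset_latt hyv) hyne
  linarith

open Classical in
/-- the cone extension of `H` on the face `G` -/
noncomputable def coneval (η : ℝ) (G : GridFace m) (y₀ : Euc ν)
    (H : Euc m × ℝ → Euc ν) (p : Euc m × ℝ) : Euc ν :=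
  if h : G.free.Nonempty then
    (if p.1 = G.center then y₀
     else H (bproj η G h p.1, 1 - (Mfun G h p.1 / η) * (1 - p.2)))
  else y₀

variable (hK : IsSubskeleton c η m K)
include hK

/-- the boundary projection lands in the lower skeleton -/
lemma bproj_mem_lower (hη : 0 < η) {e : ℕ} {G : GridFace m} (hG : G ∈ skelFaces η K e)
    (h : G.free.Nonempty) {x : Euc m} (hx : x ∈ G.toSet η) (hne : x ≠ G.center) :
    bproj η G h x ∈ G.toSet η ∧ bproj η G h x ∈ Kset η c K ((e:ℤ) - 1) := by
  have hM : 0 < Mfun G h x := Mfun_pos G h hx hne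
  have hMη : Mfun G h x ≤ η := Mfun_le G h hx
  have hdiv : 0 ≤ η / Mfun G h x := le_of_lt (div_pos hη hM)
  have hcoord : ∀ i, |bproj η G h x i - G.center i|
      = (η / Mfun G h x) * |x i - G.center i| := by
    intro i
    rw [bproj_apply, show G.center i + η / Mfun G h x * (x i - G.center i) - G.center i
      = η / Mfun G h x * (x i - G.center i) by ring, abs_mul, abs_of_nonneg hdiv]
  have hmem : bproj η G h x ∈ G.toSet η := by
    constructor
    · intro i hi
      rw [hcoord i]
      calc (η / Mfun G h x) * |x i - G.center i|
          ≤ (η / Mfun G h x) * Mfun G h x := by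
            apply mul_le_mul_of_nonneg_left _ hdiv
            exact Finset.le_sup' (fun i => |x i - G.center i|) hi
      _ = η := div_mul_cancel₀ η (ne_of_gt hM)
    · intro i hi
      rw [bproj_apply, hx.2 i hi]
      ring
  refine ⟨hmem, ?_⟩
  -- Mfun of the projection is η
  have hMb : Mfun G h (bproj η G h x) = η := by
    unfold Mfun
    rw [Finset.sup'_congr h rfl (fun i _ => hcoord i), sup'_const_mul h _ hdiv]
    show η / Mfun G h x * Mfun G h x = η
    exact div_mul_cancel₀ η (ne_of_gt hM)
  -- some free coordinate achieves η, hence is at a vertex level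
  obtain ⟨i₀, hi₀, hsup⟩ := Finset.exists_mem_eq_sup' h
    (fun i => |bproj η G h x i - G.center i|)
  have heta : |bproj η G h x i₀ - G.center i₀| = η := by
    conv_rhs => rw [← hMb]
    exact hsup.symm
  refine ⟨face_toSet_subset_X hK (le_of_lt hη) hG hmem, ?_⟩
  have hv : (bproj η G h x) i₀ ∈ vlvl η (c i₀) := face_vertex_coord hK hη hG hi₀ heta
  have hsubs : nonvtx η c (bproj η G h x) ⊆ G.free.erase i₀ := by
    apply Finset.subset_erase.mpr
    constructor
    · exact face_nonvtx_subset hK hG hmem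
    · intro hmem'
      exact (mem_nonvtx.mp hmem') hv
  calc ((nonvtx η c (bproj η G h x)).card : ℤ)
      ≤ ((G.free.erase i₀).card : ℤ) := by exact_mod_cast Finset.card_le_card hsubs
  _ = (G.free.card : ℤ) - 1 := by
      rw [Finset.card_erase_of_mem hi₀]
      have : 1 ≤ G.free.card := Finset.card_pos.mpr h
      omega
  _ = (e:ℤ) - 1 := by rw [hG.1]

lemma bproj_eq_self_of_lower (hη : 0 < η) {e : ℕ} {G : GridFace m}
    (hG : G ∈ skelFaces η K e) (h : G.free.Nonempty) {x : Euc m} (hx : x ∈ G.toSet η)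
    (hlow : x ∈ Kset η c K ((e:ℤ) - 1)) :
    bproj η G h x = x ∧ Mfun G h x = η := by
  have hM := Mfun_eq_of_lower hK hη hG h hx hlow
  refine ⟨?_, hM⟩
  unfold bproj
  rw [hM, div_self (ne_of_gt hη), one_smul]
  exact add_sub_cancel _ _

lemma face_center_not_lower (hη : 0 < η) {e : ℕ} {G : GridFace m}
    (hG : G ∈ skelFaces η K e) : G.center ∉ Kset η c K ((e:ℤ) - 1) := by
  intro hmem
  have hsub : G.free ⊆ nonvtx η c G.center := by
    intro i hi
    rw [mem_nonvtx]
    obtain ⟨z, hz⟩ := face_center_free hK hG hi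
    rw [hz]
    exact center_not_vlvl (ne_of_gt hη) z
  have h1 : (e:ℤ) ≤ ((nonvtx η c G.center).card : ℤ) := by
    have := Finset.card_le_card hsub
    rw [hG.1] at this
    exact_mod_cast this
  have h2 := hmem.2
  omega

end Part5


/-! ### Part 6: the extension step -/

section Part6

variable {m : ℕ} {η : ℝ} {c : Euc m} {K : Set (GridFace m)} {ν : ℕ}

variable (hK : IsSubskeleton c η m K)
include hK

lemma coneval_eq_H (hη : 0 < η) {e : ℕ} {G : GridFace m} (hG : G ∈ skelFaces η K e)
    (h : G.free.Nonempty) (y₀ : Euc ν) (H : Euc m × ℝ → Euc ν) {p : Euc m × ℝ}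
    (hp1 : p.1 ∈ G.toSet η) (hlow : p.1 ∈ Kset η c K ((e:ℤ)-1)) :
    coneval η G y₀ H p = H p := by
  have hpc : p.1 ≠ G.center := by
    intro hc
    exact face_center_not_lower hK hη hG (hc ▸ hlow)
  obtain ⟨hb, hM⟩ := bproj_eq_self_of_lower hK hη hG h hp1 hlow
  unfold coneval
  rw [dif_pos h, if_neg hpc, hb, hM, div_self (ne_of_gt hη)]
  have harg : (p.1, 1 - 1 * (1 - p.2)) = p := by
    have h2 : 1 - 1 * (1 - p.2) = p.2 := by ring
    rw [h2]
  rw [harg]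

lemma coneval_end (hη : 0 < η) {e : ℕ} {G : GridFace m} (hG : G ∈ skelFaces η K e)
    (h : G.free.Nonempty) (y₀ : Euc ν) (H : Euc m × ℝ → Euc ν)
    (Hend : ∀ x ∈ Kset η c K ((e:ℤ)-1), H (x, 1) = y₀)
    {x : Euc m} (hx : x ∈ G.toSet η) :
    coneval η G y₀ H (x, 1) = y₀ := by
  unfold coneval
  rw [dif_pos h]
  by_cases hxc : x = G.center
  · rw [if_pos hxc]
  · rw [if_neg hxc]
    have harg : (1:ℝ) - Mfun G h x / η * (1 - 1) = 1 := by ring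
    rw [show ((x, 1) : Euc m × ℝ).1 = x from rfl] at *
    simp only [harg]
    exact Hend _ (bproj_mem_lower hK hη hG h hx hxc).2

lemma coneval_mem (hη : 0 < η) {e : ℕ} {G : GridFace m} (hG : G ∈ skelFaces η K e)
    (h : G.free.Nonempty) {N : Set (Euc ν)} {y₀ : Euc ν} (hy₀ : y₀ ∈ N)
    (H : Euc m × ℝ → Euc ν)
    (Hmaps : ∀ p ∈ (Kset η c K ((e:ℤ)-1)) ×ˢ Icc (0:ℝ) 1, H p ∈ N)
    {p : Euc m × ℝ} (hp1 : p.1 ∈ G.toSet η) (hp2 : p.2 ∈ Icc (0:ℝ) 1) :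
    coneval η G y₀ H p ∈ N := by
  unfold coneval
  rw [dif_pos h]
  by_cases hpc : p.1 = G.center
  · rw [if_pos hpc]; exact hy₀
  · rw [if_neg hpc]
    apply Hmaps
    rw [Set.mem_prod]
    refine ⟨(bproj_mem_lower hK hη hG h hp1 hpc).2, ?_⟩
    have hM0 : 0 ≤ Mfun G h p.1 := Mfun_nonneg G h p.1
    have hMη : Mfun G h p.1 ≤ η := Mfun_le G h hp1
    have h1 : 0 ≤ Mfun G h p.1 / η := div_nonneg hM0 (le_of_lt hη)
    have h2 : Mfun G h p.1 / η ≤ 1 := (div_le_one hη).mpr hMη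
    have h3 : 0 ≤ 1 - p.2 := by linarith [hp2.2]
    have h4 : 1 - p.2 ≤ 1 := by linarith [hp2.1]
    constructor
    · have : Mfun G h p.1 / η * (1 - p.2) ≤ 1 := by nlinarith
      linarith
    · have : 0 ≤ Mfun G h p.1 / η * (1 - p.2) := by positivity
      linarith

lemma coneval_continuousOn (hη : 0 < η) {a : Euc m} {r : ℝ}
    (hX : skelUnion η K = cubeC a r) {e : ℕ} {G : GridFace m}
    (hG : G ∈ skelFaces η K e) (h : G.free.Nonempty) (y₀ : Euc ν)
    (H : Euc m × ℝ → Euc ν)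
    (Hcont : ContinuousOn H ((Kset η c K ((e:ℤ)-1)) ×ˢ Icc (0:ℝ) 1))
    (Hend : ∀ x ∈ Kset η c K ((e:ℤ)-1), H (x, 1) = y₀) :
    ContinuousOn (coneval η G y₀ H) (G.toSet η ×ˢ Icc (0:ℝ) 1) := by
  intro p hp
  rw [Set.mem_prod] at hp
  obtain ⟨hp1, hp2⟩ := hp
  by_cases hpc : p.1 = G.center
  · -- continuity at the cone point
    rw [Metric.continuousWithinAt_iff]
    intro ε hε
    have hvalp : coneval η G y₀ H p = y₀ := by
      unfold coneval; rw [dif_pos h, if_pos hpc]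
    have hcpt : IsCompact ((Kset η c K ((e:ℤ)-1)) ×ˢ Icc (0:ℝ) 1) :=
      (Kset_isCompact hη hX _).prod isCompact_Icc
    have hUC := hcpt.uniformContinuousOn_of_continuous Hcont
    rw [Metric.uniformContinuousOn_iff] at hUC
    obtain ⟨δ', hδ', hUCd⟩ := hUC ε hε
    have hMc : ContinuousAt (Mfun G h) G.center := (Mfun_continuous G h).continuousAt
    rw [Metric.continuousAt_iff] at hMc
    obtain ⟨δ₀, hδ₀, hMcd⟩ := hMc (η * δ') (by positivity)
    refine ⟨δ₀, hδ₀, ?_⟩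
    rintro q hq hqdist
    rw [Set.mem_prod] at hq
    rw [hvalp]
    by_cases hqc : q.1 = G.center
    · have hvq : coneval η G y₀ H q = y₀ := by
        unfold coneval; rw [dif_pos h, if_pos hqc]
      rw [hvq, dist_self]; exact hε
    · have hvq : coneval η G y₀ H q
          = H (bproj η G h q.1, 1 - Mfun G h q.1 / η * (1 - q.2)) := by
        unfold coneval; rw [dif_pos h, if_neg hqc]
      rw [hvq]
      obtain ⟨hbT, hbK⟩ := bproj_mem_lower hK hη hG h hq.1 hqc
      have hM0 : 0 < Mfun G h q.1 := Mfun_pos G h hq.1 hqc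
      have hMη : Mfun G h q.1 ≤ η := Mfun_le G h hq.1
      have hτmem : 1 - Mfun G h q.1 / η * (1 - q.2) ∈ Icc (0:ℝ) 1 := by
        have h1 : 0 ≤ Mfun G h q.1 / η := by positivity
        have h2 : Mfun G h q.1 / η ≤ 1 := (div_le_one hη).mpr hMη
        have h3 : 0 ≤ 1 - q.2 := by linarith [hq.2.2]
        have h4 : 1 - q.2 ≤ 1 := by linarith [hq.2.1]
        constructor
        · have : Mfun G h q.1 / η * (1 - q.2) ≤ 1 := by nlinarith
          linarith
        · have : 0 ≤ Mfun G h q.1 / η * (1 - q.2) := by positivity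
          linarith
      have hb1 : H (bproj η G h q.1, 1) = y₀ := Hend _ hbK
      rw [← hb1]
      apply hUCd _ (Set.mem_prod.mpr ⟨hbK, hτmem⟩)
        _ (Set.mem_prod.mpr ⟨hbK, right_mem_Icc.mpr (by norm_num)⟩)
      -- distance estimate
      rw [Prod.dist_eq]
      have hdfst : dist (bproj η G h q.1) (bproj η G h q.1) = 0 := dist_self _
      have hM' : Mfun G h q.1 < η * δ' := by
        have hd1 : dist q.1 p.1 ≤ dist q p := by
          rw [Prod.dist_eq]; exact le_max_left _ _
        have := hMcd (show dist q.1 G.center < δ₀ by rw [← hpc]; linarith)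
        rw [Real.dist_eq, Mfun_center] at this
        calc Mfun G h q.1 ≤ |Mfun G h q.1 - 0| := by rw [sub_zero]; exact le_abs_self _
        _ < η * δ' := this
      have hsnd : dist (1 - Mfun G h q.1 / η * (1 - q.2)) (1:ℝ) < δ' := by
        rw [Real.dist_eq]
        have he1 : |1 - Mfun G h q.1 / η * (1 - q.2) - 1|
            = Mfun G h q.1 / η * (1 - q.2) := by
          rw [show 1 - Mfun G h q.1 / η * (1 - q.2) - 1
            = -(Mfun G h q.1 / η * (1 - q.2)) by ring, abs_neg, abs_of_nonneg]
          have h3 : 0 ≤ 1 - q.2 := by linarith [hq.2.2]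
          positivity
        rw [he1]
        have h3 : 0 ≤ 1 - q.2 := by linarith [hq.2.2]
        have h4 : 1 - q.2 ≤ 1 := by linarith [hq.2.1]
        have h5 : Mfun G h q.1 / η * (1 - q.2) ≤ Mfun G h q.1 / η := by
          have : 0 ≤ Mfun G h q.1 / η := by positivity
          nlinarith
        have h6 : Mfun G h q.1 / η < δ' := by
          rw [div_lt_iff₀ hη]
          linarith [hM']
        linarith
      rw [hdfst]
      rw [max_lt_iff]
      exact ⟨hδ', hsnd⟩
  · -- away from the cone point : composition
    have hopen : IsOpen {q : Euc m × ℝ | q.1 ≠ G.center} :=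
      IsOpen.preimage continuous_fst isOpen_ne
    rw [← continuousWithinAt_inter (hopen.mem_nhds hpc)]
    set s' := (G.toSet η ×ˢ Icc (0:ℝ) 1) ∩ {q : Euc m × ℝ | q.1 ≠ G.center} with hs'
    set φ : Euc m × ℝ → Euc m × ℝ :=
      fun q => (bproj η G h q.1, 1 - Mfun G h q.1 / η * (1 - q.2)) with hφ
    have hmapsφ : MapsTo φ s' ((Kset η c K ((e:ℤ)-1)) ×ˢ Icc (0:ℝ) 1) := by
      rintro q ⟨hqs, hqc⟩
      rw [Set.mem_prod] at hqs
      rw [Set.mem_prod]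
      simp only [hφ]
      refine ⟨(bproj_mem_lower hK hη hG h hqs.1 hqc).2, ?_⟩
      have hM0 : 0 ≤ Mfun G h q.1 := Mfun_nonneg G h q.1
      have hMη : Mfun G h q.1 ≤ η := Mfun_le G h hqs.1
      have h1 : 0 ≤ Mfun G h q.1 / η := by positivity
      have h2 : Mfun G h q.1 / η ≤ 1 := (div_le_one hη).mpr hMη
      have h3 : 0 ≤ 1 - q.2 := by linarith [hqs.2.2]
      have h4 : 1 - q.2 ≤ 1 := by linarith [hqs.2.1]
      constructor
      · have : Mfun G h q.1 / η * (1 - q.2) ≤ 1 := by nlinarith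
        linarith
      · have : 0 ≤ Mfun G h q.1 / η * (1 - q.2) := by positivity
        linarith
    have hφcont : ContinuousWithinAt φ s' p := by
      apply ContinuousWithinAt.prodMk
      · have h1 : ContinuousWithinAt (fun q : Euc m × ℝ => bproj η G h q.1) s' p := by
          apply ContinuousWithinAt.comp (g := bproj η G h)
            (f := fun q : Euc m × ℝ => q.1) (t := {x : Euc m | Mfun G h x ≠ 0})
          · exact bproj_continuousOn G h p.1
              (ne_of_gt (Mfun_pos G h hp1 hpc))
          · exact continuous_fst.continuousWithinAt
          · rintro q ⟨hqs, hqc⟩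
            rw [Set.mem_prod] at hqs
            exact ne_of_gt (Mfun_pos G h hqs.1 hqc)
        exact h1
      · apply ContinuousWithinAt.sub continuousWithinAt_const
        apply ContinuousWithinAt.mul
        · exact (((Mfun_continuous G h).comp continuous_fst).div_const η).continuousWithinAt
        · exact (continuous_const.sub continuous_snd).continuousWithinAt
    have hφp : φ p ∈ (Kset η c K ((e:ℤ)-1)) ×ˢ Icc (0:ℝ) 1 :=
      hmapsφ ⟨Set.mem_prod.mpr ⟨hp1, hp2⟩, hpc⟩
    have hcomp : ContinuousWithinAt (H ∘ φ) s' p :=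
      ContinuousWithinAt.comp (Hcont _ hφp) hφcont hmapsφ
    apply hcomp.congr
    · rintro q ⟨hqs, hqc⟩
      unfold coneval
      rw [dif_pos h, if_neg hqc]
      rfl
    · unfold coneval
      rw [dif_pos h, if_neg hpc]
      rfl

/-- THE STEP: extend `H` from the `(e-1)`-skeleton to the `e`-skeleton. -/
theorem step_extend (hη : 0 < η) (hm : 0 < m)
    {a : Euc m} {r : ℝ} (hX : skelUnion η K = cubeC a r)
    {N : Set (Euc ν)} {y₀ : Euc ν} (hy₀ : y₀ ∈ N)
    {e : ℕ} (he : 1 ≤ e) (hem : e ≤ m)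
    (H : Euc m × ℝ → Euc ν)
    (Hcont : ContinuousOn H ((Kset η c K ((e:ℤ)-1)) ×ˢ Icc (0:ℝ) 1))
    (Hmaps : ∀ p ∈ (Kset η c K ((e:ℤ)-1)) ×ˢ Icc (0:ℝ) 1, H p ∈ N)
    (Hend : ∀ x ∈ Kset η c K ((e:ℤ)-1), H (x, 1) = y₀) :
    ∃ H' : Euc m × ℝ → Euc ν,
      ContinuousOn H' ((Kset η c K (e:ℤ)) ×ˢ Icc (0:ℝ) 1) ∧
      (∀ p ∈ (Kset η c K (e:ℤ)) ×ˢ Icc (0:ℝ) 1, H' p ∈ N) ∧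
      (∀ x ∈ Kset η c K (e:ℤ), H' (x, 1) = y₀) ∧
      (∀ p : Euc m × ℝ, p.1 ∈ Kset η c K ((e:ℤ)-1) → H' p = H p) := by
  classical
  have hfree : ∀ {G : GridFace m}, G ∈ skelFaces η K e → G.free.Nonempty := by
    intro G hG
    apply Finset.card_pos.mp
    rw [hG.1]; exact he
  set H' : Euc m × ℝ → Euc ν := fun p =>
    if p.1 ∈ Kset η c K ((e:ℤ)-1) then H p
    else if hex : ∃ G, G ∈ skelFaces η K e ∧ p.1 ∈ G.toSet η then
      coneval η hex.choose y₀ H p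
    else y₀ with hH'
  -- pointwise identification on each face
  have key : ∀ (G : GridFace m), G ∈ skelFaces η K e → ∀ p : Euc m × ℝ,
      p.1 ∈ G.toSet η → H' p = coneval η G y₀ H p := by
    intro G hG p hp1
    by_cases hpL : p.1 ∈ Kset η c K ((e:ℤ)-1)
    · rw [hH']
      simp only [if_pos hpL]
      exact (coneval_eq_H hK hη hG (hfree hG) y₀ H hp1 hpL).symm
    · have hex : ∃ G', G' ∈ skelFaces η K e ∧ p.1 ∈ G'.toSet η := ⟨G, hG, hp1⟩
      rw [hH']
      simp only [if_neg hpL, dif_pos hex]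
      have hcard : (nonvtx η c p.1).card = e := by
        have hle : ((nonvtx η c p.1).card : ℤ) ≤ (e:ℤ) :=
          (face_toSet_subset_Kset hK (le_of_lt hη) hG hp1).2
        have hX' : p.1 ∈ skelUnion η K :=
          face_toSet_subset_X hK (le_of_lt hη) hG hp1
        have hgt : ¬ ((nonvtx η c p.1).card : ℤ) ≤ (e:ℤ) - 1 := by
          intro hcon
          exact hpL ⟨hX', hcon⟩
        omega
      have := face_unique hK hη hex.choose_spec.1 hG hex.choose_spec.2 hp1 hcard
      rw [this]
  -- the pointwise value on the lower skeleton
  have hlowval : ∀ p : Euc m × ℝ, p.1 ∈ Kset η c K ((e:ℤ)-1) → H' p = H p := by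
    intro p hp
    rw [hH']
    simp only [if_pos hp]
  refine ⟨H', ?_, ?_, ?_, hlowval⟩
  · -- continuity
    intro p hp
    rw [Set.mem_prod] at hp
    obtain ⟨hp1, hp2⟩ := hp
    by_cases hpL : p.1 ∈ Kset η c K ((e:ℤ)-1)
    · -- seam point
      obtain ⟨ε, hε, hloc⟩ := locality hK hη hm p.1
      have hfin : {G : GridFace m | G ∈ skelFaces η K e ∧ p.1 ∈ G.toSet η}.Finite :=
        faces_at_finite hK hη e p.1
      set t : Finset (Option (GridFace m)) := insert none (hfin.toFinset.image some) with ht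
      set S : Option (GridFace m) → Set (Euc m × ℝ) := fun o =>
        match o with
        | none => (Kset η c K ((e:ℤ)-1)) ×ˢ Icc (0:ℝ) 1
        | some G => G.toSet η ×ˢ Icc (0:ℝ) 1 with hS
      apply cwa_of_cover (t := t) (S := S) hε
      · -- covering
        rintro q ⟨hqs, hqball⟩
        rw [Set.mem_prod] at hqs
        by_cases hqL : q.1 ∈ Kset η c K ((e:ℤ)-1)
        · refine Set.mem_biUnion (Finset.mem_insert_self _ _) ?_
          exact Set.mem_prod.mpr ⟨hqL, hqs.2⟩
        · obtain ⟨G', hG', hqG'⟩ := Kset_cover hK hη hem hqs.1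
          have hdq : dist p.1 q.1 < ε := by
            have : dist q.1 p.1 ≤ dist q p := by rw [Prod.dist_eq]; exact le_max_left _ _
            rw [mem_ball] at hqball
            rw [dist_comm]
            linarith
          have hpG' : p.1 ∈ G'.toSet η := hloc e G' hG' q.1 hqG' hdq
          have hmemt : (some G') ∈ t := by
            rw [ht]
            apply Finset.mem_insert_of_mem
            apply Finset.mem_image_of_mem
            rw [Set.Finite.mem_toFinset]
            exact ⟨hG', hpG'⟩
          exact Set.mem_biUnion hmemt (Set.mem_prod.mpr ⟨hqG', hqs.2⟩)
      · -- continuity on the pieces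
        intro o ho
        match o with
        | none =>
            apply (Hcont p (Set.mem_prod.mpr ⟨hpL, hp2⟩)).congr
            · intro q hq
              rw [Set.mem_prod] at hq
              exact hlowval q hq.1
            · exact hlowval p hpL
        | some G =>
            have hGmem : G ∈ skelFaces η K e ∧ p.1 ∈ G.toSet η := by
              rw [ht] at ho
              rcases Finset.mem_insert.mp ho with hcon | hmem
              · exact absurd hcon (by simp)
              · obtain ⟨G'', hG'', hGG⟩ := Finset.mem_image.mp hmem
                rw [Set.Finite.mem_toFinset] at hG''
                obtain rfl : G'' = G := by injection hGG
                exact hG''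
            apply (coneval_continuousOn hK hη hX hGmem.1 (hfree hGmem.1) y₀ H Hcont Hend
              p (Set.mem_prod.mpr ⟨hGmem.2, hp2⟩)).congr
            · intro q hq
              rw [Set.mem_prod] at hq
              exact key G hGmem.1 q hq.1
            · exact key G hGmem.1 p hGmem.2
    · -- interior point of a face
      have hcard : (nonvtx η c p.1).card = e := by
        have hle : ((nonvtx η c p.1).card : ℤ) ≤ (e:ℤ) := hp1.2
        have hgt : ¬ ((nonvtx η c p.1).card : ℤ) ≤ (e:ℤ) - 1 := by
          intro hcon
          exact hpL ⟨hp1.1, hcon⟩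
        omega
      obtain ⟨G, hG, hp1G⟩ := Kset_cover hK hη hem hp1
      obtain ⟨ρ₁, hρ₁, hstay⟩ := stay_nonvtx hη hm c p.1
      obtain ⟨ε, hε, hloc⟩ := locality hK hη hm p.1
      have hρ : 0 < min ρ₁ ε := lt_min hρ₁ hε
      apply cwa_of_cover (t := ({0} : Finset ℕ))
        (S := fun _ => G.toSet η ×ˢ Icc (0:ℝ) 1) hρ
      · rintro q ⟨hqs, hqball⟩
        rw [Set.mem_prod] at hqs
        have hdq : dist p.1 q.1 < min ρ₁ ε := by
          have : dist q.1 p.1 ≤ dist q p := by rw [Prod.dist_eq]; exact le_max_left _ _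
          rw [mem_ball] at hqball
          rw [dist_comm]
          linarith
        have hq1L : ¬ q.1 ∈ Kset η c K ((e:ℤ)-1) := by
          intro hqL
          have hsubs := hstay q.1 (lt_of_lt_of_le hdq (min_le_left _ _))
          have h1 : e ≤ (nonvtx η c q.1).card := by
            rw [← hcard]
            exact Finset.card_le_card hsubs
          have h2 := hqL.2
          omega
        obtain ⟨G', hG', hqG'⟩ := Kset_cover hK hη hem hqs.1
        have hpG' : p.1 ∈ G'.toSet η :=
          hloc e G' hG' q.1 hqG' (lt_of_lt_of_le hdq (min_le_right _ _))
        have : G' = G := face_unique hK hη hG' hG hpG' hp1G hcard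
        subst this
        exact Set.mem_biUnion (Finset.mem_singleton_self 0)
          (Set.mem_prod.mpr ⟨hqG', hqs.2⟩)
      · intro o _
        apply (coneval_continuousOn hK hη hX hG (hfree hG) y₀ H Hcont Hend
          p (Set.mem_prod.mpr ⟨hp1G, hp2⟩)).congr
        · intro q hq
          rw [Set.mem_prod] at hq
          exact key G hG q hq.1
        · exact key G hG p hp1G
  · -- maps into N
    intro p hp
    rw [Set.mem_prod] at hp
    by_cases hpL : p.1 ∈ Kset η c K ((e:ℤ)-1)
    · rw [hlowval p hpL]
      exact Hmaps p (Set.mem_prod.mpr ⟨hpL, hp.2⟩)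
    · obtain ⟨G, hG, hp1G⟩ := Kset_cover hK hη hem hp.1
      rw [key G hG p hp1G]
      exact coneval_mem hK hη hG (hfree hG) hy₀ H Hmaps hp1G hp.2
  · -- value 1 at time 1
    intro x hx
    by_cases hpL : x ∈ Kset η c K ((e:ℤ)-1)
    · rw [hlowval (x,1) hpL]
      exact Hend x hpL
    · obtain ⟨G, hG, hxG⟩ := Kset_cover hK hη hem hx
      rw [key G hG (x,1) hxG]
      exact coneval_end hK hη hG (hfree hG) y₀ H Hend hxG

end Part6


/-! ### Part 7: sup norm and the cube/ball correspondence -/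

section Part7

variable {k : ℕ}

def supn (hk : 0 < k) (v : Euc k) : ℝ :=
  Finset.univ.sup' (@Finset.univ_nonempty (Fin k) _ ⟨⟨0, hk⟩⟩) fun i => |v i|

lemma coord_le_supn (hk : 0 < k) (v : Euc k) (i : Fin k) : |v i| ≤ supn hk v :=
  Finset.le_sup' (fun i => |v i|) (Finset.mem_univ i)

lemma supn_nonneg (hk : 0 < k) (v : Euc k) : 0 ≤ supn hk v :=
  le_trans (abs_nonneg _) (coord_le_supn hk v ⟨0, hk⟩)

lemma supn_le (hk : 0 < k) {v : Euc k} {b : ℝ} (h : ∀ i, |v i| ≤ b) : supn hk v ≤ b :=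
  Finset.sup'_le _ _ fun i _ => h i

lemma supn_zero (hk : 0 < k) : supn hk (0 : Euc k) = 0 := by
  apply le_antisymm
  · exact supn_le hk fun i => by norm_num [show (0 : Euc k) i = 0 from rfl]
  · exact supn_nonneg hk 0

lemma supn_pos (hk : 0 < k) {v : Euc k} (hv : v ≠ 0) : 0 < supn hk v := by
  have : ∃ i, v i ≠ 0 := by
    by_contra h
    push_neg at h
    exact hv (PiLp.ext h)
  obtain ⟨i, hi⟩ := this
  exact lt_of_lt_of_le (abs_pos.mpr hi) (coord_le_supn hk v i)

lemma supn_ne_zero_iff (hk : 0 < k) {v : Euc k} : supn hk v ≠ 0 ↔ v ≠ 0 := by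
  constructor
  · intro h hv
    exact h (hv ▸ supn_zero hk)
  · intro hv
    exact ne_of_gt (supn_pos hk hv)

lemma supn_continuous (hk : 0 < k) : Continuous (supn hk) := by
  apply continuous_finset_sup'
  intro i
  have h : Continuous fun v : Euc k => v i := PiLp.continuous_apply 2 _ i
  exact h.abs

lemma supn_smul (hk : 0 < k) (t : ℝ) (v : Euc k) :
    supn hk (t • v) = |t| * supn hk v := by
  unfold supn
  rw [← sup'_const_mul _ (fun i => |v i|) (abs_nonneg t)]
  apply Finset.sup'_congr _ rfl
  intro i _
  rw [show (t • v) i = t * v i from rfl, abs_mul]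

lemma supn_le_norm (hk : 0 < k) (v : Euc k) : supn hk v ≤ ‖v‖ :=
  supn_le hk fun i => euc_coord_le_norm v i

lemma norm_le_supn (hk : 0 < k) (v : Euc k) : ‖v‖ ≤ supn hk v * Real.sqrt k :=
  euc_norm_le_sqrt v (supn_nonneg hk v) (fun i => coord_le_supn hk v i)

open Classical in
noncomputable def cubeToBall (hk : 0 < k) (v : Euc k) : Euc k :=
  if v = 0 then 0 else (supn hk v / ‖v‖) • v

open Classical in
noncomputable def ballToCube (hk : 0 < k) (w : Euc k) : Euc k :=
  if w = 0 then 0 else (‖w‖ / supn hk w) • w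

lemma norm_cubeToBall (hk : 0 < k) (v : Euc k) : ‖cubeToBall hk v‖ = supn hk v := by
  unfold cubeToBall
  by_cases hv : v = 0
  · rw [if_pos hv, hv, supn_zero hk, norm_zero]
  · rw [if_neg hv, norm_smul, Real.norm_eq_abs,
      abs_of_nonneg (div_nonneg (supn_nonneg hk v) (norm_nonneg v)),
      div_mul_cancel₀ _ (norm_ne_zero_iff.mpr hv)]

lemma supn_ballToCube (hk : 0 < k) (w : Euc k) : supn hk (ballToCube hk w) = ‖w‖ := by
  unfold ballToCube
  by_cases hw : w = 0
  · rw [if_pos hw, hw, supn_zero hk, norm_zero]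
  · rw [if_neg hw, supn_smul,
      abs_of_nonneg (div_nonneg (norm_nonneg w) (supn_nonneg hk w)),
      div_mul_cancel₀ _ (supn_ne_zero_iff hk |>.mpr hw)]

lemma ballToCube_cubeToBall (hk : 0 < k) (v : Euc k) :
    ballToCube hk (cubeToBall hk v) = v := by
  by_cases hv : v = 0
  · rw [hv]
    unfold cubeToBall ballToCube
    rw [if_pos rfl, if_pos rfl]
  · have h1 : cubeToBall hk v ≠ 0 := by
      intro h
      have := norm_cubeToBall hk v
      rw [h, norm_zero] at this
      exact (supn_ne_zero_iff hk |>.mpr hv) this.symm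
    unfold ballToCube
    rw [if_neg h1, norm_cubeToBall, ]
    unfold cubeToBall
    rw [if_neg hv, supn_smul, smul_smul,
      abs_of_nonneg (div_nonneg (supn_nonneg hk v) (norm_nonneg v))]
    have hs : supn hk v ≠ 0 := supn_ne_zero_iff hk |>.mpr hv
    have hn : ‖v‖ ≠ 0 := norm_ne_zero_iff.mpr hv
    rw [show supn hk v / (supn hk v / ‖v‖ * supn hk v) * (supn hk v / ‖v‖) = 1 by
      field_simp]
    exact one_smul _ _

lemma cubeToBall_continuous (hk : 0 < k) : Continuous (cubeToBall hk) := by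
  rw [continuous_iff_continuousAt]
  intro v
  by_cases hv : v = 0
  · subst hv
    rw [Metric.continuousAt_iff]
    intro ε hε
    refine ⟨ε, hε, ?_⟩
    intro w hw
    have hval : cubeToBall hk (0 : Euc k) = 0 := by unfold cubeToBall; rw [if_pos rfl]
    rw [hval, dist_zero_right, norm_cubeToBall]
    rw [dist_zero_right] at hw
    exact lt_of_le_of_lt (supn_le_norm hk w) hw
  · have : ContinuousAt (fun w : Euc k => (supn hk w / ‖w‖) • w) v := by
      apply ContinuousAt.fun_smul
      · exact ((supn_continuous hk).continuousAt).div
          (continuous_norm.continuousAt) (norm_ne_zero_iff.mpr hv)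
      · exact continuousAt_id
    apply this.congr
    rw [Filter.eventuallyEq_iff_exists_mem]
    refine ⟨{w : Euc k | w ≠ 0}, ?_, ?_⟩
    · exact IsOpen.mem_nhds isOpen_ne hv
    · intro w hw
      unfold cubeToBall
      rw [if_neg hw]

lemma ballToCube_continuous (hk : 0 < k) : Continuous (ballToCube hk) := by
  rw [continuous_iff_continuousAt]
  intro w
  by_cases hw : w = 0
  · subst hw
    rw [Metric.continuousAt_iff]
    intro ε hε
    have hk1 : (1:ℝ) ≤ Real.sqrt k := by
      rw [show (1:ℝ) = Real.sqrt 1 by rw [Real.sqrt_one]]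
      apply Real.sqrt_le_sqrt
      exact_mod_cast hk
    refine ⟨ε / Real.sqrt k, by positivity, ?_⟩
    intro v hv
    have hval : ballToCube hk (0 : Euc k) = 0 := by unfold ballToCube; rw [if_pos rfl]
    rw [hval, dist_zero_right]
    rw [dist_zero_right] at hv
    calc ‖ballToCube hk v‖ ≤ supn hk (ballToCube hk v) * Real.sqrt k := norm_le_supn hk _
    _ = ‖v‖ * Real.sqrt k := by rw [supn_ballToCube]
    _ < (ε / Real.sqrt k) * Real.sqrt k := by
        apply mul_lt_mul_of_pos_right hv
        linarith
    _ = ε := by field_simp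
  · have : ContinuousAt (fun v : Euc k => (‖v‖ / supn hk v) • v) w := by
      apply ContinuousAt.fun_smul
      · exact (continuous_norm.continuousAt).div
          ((supn_continuous hk).continuousAt) (supn_ne_zero_iff hk |>.mpr hw)
      · exact continuousAt_id
    apply this.congr
    rw [Filter.eventuallyEq_iff_exists_mem]
    refine ⟨{v : Euc k | v ≠ 0}, ?_, ?_⟩
    · exact IsOpen.mem_nhds isOpen_ne hw
    · intro v hv
      unfold ballToCube
      rw [if_neg hv]

lemma cubeToBall_mem_closedBall (hk : 0 < k) {v : Euc k} (hv : supn hk v ≤ 1) :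
    cubeToBall hk v ∈ closedBall (0 : Euc k) 1 := by
  rw [mem_closedBall, dist_zero_right, norm_cubeToBall]
  exact hv

lemma cubeToBall_mem_sphere (hk : 0 < k) {v : Euc k} (hv : supn hk v = 1) :
    cubeToBall hk v ∈ sphere (0 : Euc k) 1 := by
  rw [mem_sphere, dist_zero_right, norm_cubeToBall]
  exact hv

lemma ballToCube_supn_of_sphere (hk : 0 < k) {w : Euc k}
    (hw : w ∈ sphere (0 : Euc k) 1) : supn hk (ballToCube hk w) = 1 := by
  rw [supn_ballToCube]
  rw [mem_sphere, dist_zero_right] at hw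
  exact hw

lemma ballToCube_supn_le (hk : 0 < k) {w : Euc k}
    (hw : w ∈ closedBall (0 : Euc k) 1) : supn hk (ballToCube hk w) ≤ 1 := by
  rw [supn_ballToCube]
  rw [mem_closedBall, dist_zero_right] at hw
  exact hw

end Part7


/-! ### Part 8: charts on ℓ-face cylinders -/

section Part8

variable {m ℓ : ℕ} {η : ℝ} {c : Euc m} {K : Set (GridFace m)}

lemma toSet_isClosed (η : ℝ) (G : GridFace m) : IsClosed (G.toSet η) := by
  classical
  have heq : G.toSet η = (⋂ i ∈ G.free, {x : Euc m | |x i - G.center i| ≤ η}) ∩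
      (⋂ i ∈ (G.freeᶜ : Finset (Fin m)), {x : Euc m | x i = G.center i}) := by
    ext x
    simp only [GridFace.toSet, mem_inter_iff, mem_iInter, mem_setOf_eq,
      Finset.mem_compl]
  rw [heq]
  apply IsClosed.inter
  · refine isClosed_biInter fun i _ => ?_
    have h : Continuous fun x : Euc m => x i := PiLp.continuous_apply 2 _ i
    exact isClosed_le ((h.sub continuous_const).abs) continuous_const
  · refine isClosed_biInter fun i _ => ?_
    have h : Continuous fun x : Euc m => x i := PiLp.continuous_apply 2 _ i
    exact isClosed_eq h continuous_const

variable (hK : IsSubskeleton c η m K)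
include hK

lemma face_lower_of_coord (hη : 0 < η) {e : ℕ} {G : GridFace m}
    (hG : G ∈ skelFaces η K e) {i : Fin m} (hi : i ∈ G.free) {x : Euc m}
    (hx : x ∈ G.toSet η) (heq : |x i - G.center i| = η) :
    x ∈ Kset η c K ((e:ℤ) - 1) := by
  refine ⟨face_toSet_subset_X hK (le_of_lt hη) hG hx, ?_⟩
  have hv : x i ∈ vlvl η (c i) := face_vertex_coord hK hη hG hi heq
  have hsubs : nonvtx η c x ⊆ G.free.erase i := by
    apply Finset.subset_erase.mpr
    exact ⟨face_nonvtx_subset hK hG hx, fun hmem' => (mem_nonvtx.mp hmem') hv⟩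
  calc ((nonvtx η c x).card : ℤ) ≤ ((G.free.erase i).card : ℤ) := by
        exact_mod_cast Finset.card_le_card hsubs
  _ = (G.free.card : ℤ) - 1 := by
      rw [Finset.card_erase_of_mem hi]
      have : 1 ≤ G.free.card := Finset.card_pos.mpr ⟨i, hi⟩
      omega
  _ = (e:ℤ) - 1 := by rw [hG.1]

omit hK

/-- the embedding of free coordinates of an `ℓ`-dimensional face -/
def emb (G : GridFace m) (hcard : G.free.card = ℓ) (j : Fin ℓ) : Fin m :=
  (G.free.orderIsoOfFin hcard j : Fin m)

lemma emb_mem (G : GridFace m) (hcard : G.free.card = ℓ) (j : Fin ℓ) :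
    emb G hcard j ∈ G.free := (G.free.orderIsoOfFin hcard j).2

lemma emb_symm (G : GridFace m) (hcard : G.free.card = ℓ) {i : Fin m}
    (hi : i ∈ G.free) :
    emb G hcard ((G.free.orderIsoOfFin hcard).symm ⟨i, hi⟩) = i := by
  unfold emb
  rw [OrderIso.apply_symm_apply]

/-- chart of the cylinder `σ × ℝ` over an `ℓ`-face -/
def chart (η : ℝ) (G : GridFace m) (hcard : G.free.card = ℓ) (p : Euc m × ℝ) :
    Euc (ℓ+1) :=
  WithLp.toLp 2 (fun j => Fin.lastCases (2*p.2 - 1)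
    (fun k => (p.1 (emb G hcard k) - G.center (emb G hcard k))/η) j)

/-- inverse chart -/
def chartInv (η : ℝ) (G : GridFace m) (hcard : G.free.card = ℓ) (w : Euc (ℓ+1)) :
    Euc m × ℝ :=
  (WithLp.toLp 2 (fun i => if h : i ∈ G.free
    then G.center i + η * w (Fin.castSucc ((G.free.orderIsoOfFin hcard).symm ⟨i, h⟩))
    else G.center i),
   (w (Fin.last ℓ) + 1)/2)

lemma chart_continuous (η : ℝ) (G : GridFace m) (hcard : G.free.card = ℓ) :
    Continuous (chart η G hcard) := by
  refine (PiLp.continuous_toLp 2 _).comp ?_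
  apply continuous_pi
  intro j
  refine Fin.lastCases ?_ ?_ j
  · simp only [chart, Fin.lastCases_last, PiLp.toLp_apply]
    exact (continuous_const.mul continuous_snd).sub continuous_const
  · intro k
    simp only [chart, Fin.lastCases_castSucc, PiLp.toLp_apply]
    have h : Continuous fun p : Euc m × ℝ => p.1 (emb G hcard k) :=
      (PiLp.continuous_apply 2 _ (emb G hcard k)).comp continuous_fst
    exact (h.sub continuous_const).div_const η

lemma chartInv_continuous (η : ℝ) (G : GridFace m) (hcard : G.free.card = ℓ) :
    Continuous (chartInv η G hcard) := by
  apply Continuous.prodMk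
  · refine (PiLp.continuous_toLp 2 _).comp ?_
    apply continuous_pi
    intro i
    by_cases hi : i ∈ G.free
    · simp only [chartInv, dif_pos hi, PiLp.toLp_apply]
      exact continuous_const.add (continuous_const.mul (PiLp.continuous_apply 2 _ _))
    · simp only [chartInv, dif_neg hi, PiLp.toLp_apply]
      exact continuous_const
  · exact ((PiLp.continuous_apply 2 _ _).add continuous_const).div_const 2

lemma chartInv_chart (hη : η ≠ 0) (G : GridFace m) (hcard : G.free.card = ℓ)
    {p : Euc m × ℝ} (hp1 : p.1 ∈ G.toSet η) :
    chartInv η G hcard (chart η G hcard p) = p := by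
  unfold chartInv
  have hsnd : (chart η G hcard p (Fin.last ℓ) + 1)/2 = p.2 := by
    simp only [chart, Fin.lastCases_last, PiLp.toLp_apply]
    ring
  have hfst : WithLp.toLp 2 (fun i => if h : i ∈ G.free
      then G.center i + η * (chart η G hcard p)
        (Fin.castSucc ((G.free.orderIsoOfFin hcard).symm ⟨i, h⟩))
      else G.center i) = p.1 := by
    ext i
    simp only [PiLp.toLp_apply]
    by_cases hi : i ∈ G.free
    · rw [dif_pos hi]
      simp only [chart, Fin.lastCases_castSucc, PiLp.toLp_apply]
      rw [emb_symm G hcard hi]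
      field_simp
      ring
    · rw [dif_neg hi]
      exact (hp1.2 i hi).symm
  rw [hsnd, hfst]

lemma supn_chart_le (hη : 0 < η) (G : GridFace m) (hcard : G.free.card = ℓ)
    {p : Euc m × ℝ} (hp1 : p.1 ∈ G.toSet η) (hp2 : p.2 ∈ Icc (0:ℝ) 1) :
    supn (Nat.succ_pos ℓ) (chart η G hcard p) ≤ 1 := by
  apply supn_le
  intro j
  refine Fin.lastCases ?_ ?_ j
  · simp only [chart, Fin.lastCases_last, PiLp.toLp_apply]
    rw [abs_le]
    constructor <;> [linarith [hp2.1]; linarith [hp2.2]]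
  · intro k
    simp only [chart, Fin.lastCases_castSucc, PiLp.toLp_apply]
    rw [abs_div, abs_of_pos hη, div_le_one hη]
    exact hp1.1 _ (emb_mem G hcard k)

lemma chartInv_mem (hη : 0 < η) (G : GridFace m) (hcard : G.free.card = ℓ)
    {w : Euc (ℓ+1)} (hw : supn (Nat.succ_pos ℓ) w ≤ 1) :
    (chartInv η G hcard w).1 ∈ G.toSet η ∧ (chartInv η G hcard w).2 ∈ Icc (0:ℝ) 1 := by
  have hlast := coord_le_supn (Nat.succ_pos ℓ) w (Fin.last ℓ)
  refine ⟨⟨?_, ?_⟩, ?_, ?_⟩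
  · intro i hi
    simp only [chartInv, dif_pos hi, PiLp.toLp_apply]
    rw [show G.center i + η * w (Fin.castSucc ((G.free.orderIsoOfFin hcard).symm ⟨i, hi⟩))
      - G.center i = η * w (Fin.castSucc ((G.free.orderIsoOfFin hcard).symm ⟨i, hi⟩))
      by ring, abs_mul, abs_of_pos hη]
    calc η * |w (Fin.castSucc ((G.free.orderIsoOfFin hcard).symm ⟨i, hi⟩))|
        ≤ η * 1 := by
          apply mul_le_mul_of_nonneg_left _ (le_of_lt hη)
          exact le_trans (coord_le_supn _ w _) hw
    _ = η := mul_one η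
  · intro i hi
    simp only [chartInv, dif_neg hi, PiLp.toLp_apply]
  · simp only [chartInv, PiLp.toLp_apply]
    have := (abs_le.mp (le_trans hlast hw)).1
    linarith
  · simp only [chartInv, PiLp.toLp_apply]
    have := (abs_le.mp (le_trans hlast hw)).2
    linarith

include hK

lemma supn_chart_eq_one_of_time (hη : 0 < η) (G : GridFace m)
    (hcard : G.free.card = ℓ) {p : Euc m × ℝ} (hp1 : p.1 ∈ G.toSet η)
    (hp2 : p.2 = 0 ∨ p.2 = 1) :
    supn (Nat.succ_pos ℓ) (chart η G hcard p) = 1 := by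
  have hp2' : p.2 ∈ Icc (0:ℝ) 1 := by
    rcases hp2 with h | h <;> rw [h] <;> constructor <;> norm_num
  apply le_antisymm (supn_chart_le hη G hcard hp1 hp2')
  have : |chart η G hcard p (Fin.last ℓ)| = 1 := by
    simp only [chart, Fin.lastCases_last, PiLp.toLp_apply]
    rcases hp2 with h | h <;> rw [h] <;> norm_num
  rw [← this]
  exact coord_le_supn _ _ _

lemma supn_chart_eq_one_of_lower (hη : 0 < η) {G : GridFace m}
    (hG : G ∈ skelFaces η K ℓ) {p : Euc m × ℝ} (hp1 : p.1 ∈ G.toSet η)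
    (hlow : p.1 ∈ Kset η c K ((ℓ:ℤ)-1)) (hp2 : p.2 ∈ Icc (0:ℝ) 1) :
    supn (Nat.succ_pos ℓ) (chart η G hG.1 p) = 1 := by
  apply le_antisymm (supn_chart_le hη G hG.1 hp1 hp2)
  rcases Nat.eq_zero_or_pos ℓ with hℓ | hℓ
  · exfalso
    have := hlow.2
    subst hℓ
    have := (nonvtx η c p.1).card
    omega
  · have hfree : G.free.Nonempty := Finset.card_pos.mp (by rw [hG.1]; exact hℓ)
    have hM := Mfun_eq_of_lower hK hη hG hfree hp1 hlow
    obtain ⟨i₀, hi₀, hsup⟩ := Finset.exists_mem_eq_sup' hfree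
      (fun i => |p.1 i - G.center i|)
    have heta : |p.1 i₀ - G.center i₀| = η := by
      rw [← hM]
      unfold Mfun
      exact hsup.symm
    set k := (G.free.orderIsoOfFin hG.1).symm ⟨i₀, hi₀⟩ with hk
    have : |chart η G hG.1 p (Fin.castSucc k)| = 1 := by
      simp only [chart, Fin.lastCases_castSucc, PiLp.toLp_apply]
      rw [hk, emb_symm G hG.1 hi₀, abs_div, abs_of_pos hη, heta]
      exact div_self (ne_of_gt hη)
    rw [← this]
    exact coord_le_supn _ _ _

lemma supn_chart_boundary (hη : 0 < η) {G : GridFace m}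
    (hG : G ∈ skelFaces η K ℓ) {p : Euc m × ℝ} (hp1 : p.1 ∈ G.toSet η)
    (hsup : supn (Nat.succ_pos ℓ) (chart η G hG.1 p) = 1) :
    p.1 ∈ Kset η c K ((ℓ:ℤ)-1) ∨ p.2 = 0 ∨ p.2 = 1 := by
  obtain ⟨j, -, hj⟩ := Finset.exists_mem_eq_sup'
    (@Finset.univ_nonempty (Fin (ℓ+1)) _ ⟨⟨0, Nat.succ_pos ℓ⟩⟩)
    (fun j => |chart η G hG.1 p j|)
  have hj1 : |chart η G hG.1 p j| = 1 := by
    rw [← hsup]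
    exact hj.symm
  revert hj1
  refine Fin.lastCases ?_ ?_ j
  · intro hj1
    simp only [chart, Fin.lastCases_last, PiLp.toLp_apply] at hj1
    right
    rcases (abs_eq (by norm_num : (0:ℝ) ≤ 1)).mp hj1 with h | h
    · right; linarith
    · left; linarith
  · intro k hj1
    simp only [chart, Fin.lastCases_castSucc, PiLp.toLp_apply] at hj1
    rw [abs_div, abs_of_pos hη, div_eq_one_iff_eq (ne_of_gt hη)] at hj1
    left
    exact face_lower_of_coord hK hη hG (emb_mem G hG.1 k) hp1 hj1

end Part8


/-! ### Part 9: the base case -/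

section Part9

variable {m ℓ : ℕ} {η : ℝ} {c : Euc m} {K : Set (GridFace m)} {ν : ℕ}

lemma chart_chartInv (hη : η ≠ 0) (G : GridFace m) (hcard : G.free.card = ℓ)
    (w : Euc (ℓ+1)) : chart η G hcard (chartInv η G hcard w) = w := by
  ext j
  refine Fin.lastCases ?_ ?_ j
  · simp only [chart, Fin.lastCases_last, chartInv, PiLp.toLp_apply]
    ring
  · intro k
    simp only [chart, Fin.lastCases_castSucc, chartInv, PiLp.toLp_apply]
    rw [dif_pos (emb_mem G hcard k)]
    have hsymm : (G.free.orderIsoOfFin hcard).symm ⟨emb G hcard k, emb_mem G hcard k⟩ = k := by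
      unfold emb
      exact (G.free.orderIsoOfFin hcard).symm_apply_apply k
    rw [hsymm]
    field_simp
    ring

theorem base_case (hη : 0 < η) (hm : 0 < m) (hK : IsSubskeleton c η m K)
    {a : Euc m} {r : ℝ} (hX : skelUnion η K = cubeC a r) (hr : 0 ≤ r)
    (hcor : ∀ i, a i - r ∈ vlvl η (c i)) (hℓm : ℓ ≤ m)
    {N : Set (Euc ν)} (hπ : PiTrivial ℓ N)
    (u : Euc m → Euc ν)
    (hu : ContinuousOn u (Kset η c K (ℓ:ℤ)))
    (hu' : ∀ x ∈ Kset η c K (ℓ:ℤ), u x ∈ N) :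
    ∃ H : Euc m × ℝ → Euc ν,
      ContinuousOn H ((Kset η c K (ℓ:ℤ)) ×ˢ Icc (0:ℝ) 1) ∧
      (∀ p ∈ (Kset η c K (ℓ:ℤ)) ×ˢ Icc (0:ℝ) 1, H p ∈ N) ∧
      (∀ x ∈ Kset η c K (ℓ:ℤ), H (x, 1) = u (WithLp.toLp 2 (fun i => a i - r))) ∧
      (∀ x ∈ Kset η c K (ℓ:ℤ), H (x, 0) = u x) := by
  classical
  set corner : Euc m := WithLp.toLp 2 (fun i => a i - r) with hcornerdef
  have hcornerK : corner ∈ Kset η c K (ℓ:ℤ) := by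
    constructor
    · rw [hX]
      intro i
      rw [show corner i - a i = -r from by simp [hcornerdef], abs_neg, abs_of_nonneg hr]
    · have hempty : nonvtx η c corner = ∅ := by
        apply Finset.eq_empty_of_forall_notMem
        intro i hi
        exact (mem_nonvtx.mp hi) (hcor i)
      rw [hempty]
      simp
  set y₀ := u corner with hy₀def
  have hy₀N : y₀ ∈ N := hu' corner hcornerK
  -- boundary data
  set bdry : Euc m × ℝ → Euc ν := fun p =>
    if p.1 ∈ Kset η c K ((ℓ:ℤ)-1) then u (sweep a r p.1 p.2)
    else if p.2 ≤ 1/2 then u p.1 else y₀ with hbdry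
  have hsweepK : ∀ (x : Euc m) (t : ℝ), x ∈ Kset η c K ((ℓ:ℤ)-1) →
      sweep a r x t ∈ Kset η c K (ℓ:ℤ) := by
    intro x t hx
    have := sweep_mem_Kset hη hr hX hcor hx t
    rwa [show (ℓ:ℤ)-1+1 = (ℓ:ℤ) by ring] at this
  have hbdry_low : ∀ p : Euc m × ℝ, p.1 ∈ Kset η c K ((ℓ:ℤ)-1) →
      bdry p = u (sweep a r p.1 p.2) := by
    intro p hp
    rw [hbdry]; simp only [if_pos hp]
  have hbdry_zero : ∀ p : Euc m × ℝ, p.1 ∈ skelUnion η K → p.2 = 0 → bdry p = u p.1 := by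
    intro p hpX hp2
    rw [hbdry]
    by_cases hp : p.1 ∈ Kset η c K ((ℓ:ℤ)-1)
    · simp only [if_pos hp]
      rw [hp2, sweep_zero hr (hX ▸ hpX)]
    · simp only [if_neg hp]
      rw [if_pos (by rw [hp2]; norm_num)]
  have hbdry_one : ∀ p : Euc m × ℝ, p.1 ∈ skelUnion η K → p.2 = 1 → bdry p = y₀ := by
    intro p hpX hp2
    rw [hbdry]
    by_cases hp : p.1 ∈ Kset η c K ((ℓ:ℤ)-1)
    · simp only [if_pos hp]
      rw [hp2, sweep_one hr (hX ▸ hpX)]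
    · simp only [if_neg hp]
      rw [if_neg (by rw [hp2]; norm_num)]
  have hbdry_mem : ∀ p : Euc m × ℝ, p.1 ∈ Kset η c K (ℓ:ℤ) → bdry p ∈ N := by
    intro p hp
    rw [hbdry]
    by_cases hpL : p.1 ∈ Kset η c K ((ℓ:ℤ)-1)
    · simp only [if_pos hpL]
      exact hu' _ (hsweepK _ _ hpL)
    · simp only [if_neg hpL]
      by_cases ht : p.2 ≤ 1/2
      · rw [if_pos ht]; exact hu' _ hp
      · rw [if_neg ht]; exact hy₀N
  -- the boundary set of the cylinder over a face
  set Γ : GridFace m → Set (Euc m × ℝ) := fun G =>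
    ((G.toSet η ∩ Kset η c K ((ℓ:ℤ)-1)) ×ˢ Icc (0:ℝ) 1) ∪
    (G.toSet η ×ˢ {(0:ℝ)}) ∪ (G.toSet η ×ˢ {(1:ℝ)}) with hΓ
  -- continuity of bdry on Γ G
  have hcontΓ : ∀ G ∈ skelFaces η K ℓ, ContinuousOn bdry (Γ G) := by
    intro G hG p hp
    set SA := (G.toSet η ∩ Kset η c K ((ℓ:ℤ)-1)) ×ˢ Icc (0:ℝ) 1 with hSA
    set SB := G.toSet η ×ˢ ({(0:ℝ)} : Set ℝ) with hSB
    set SC := G.toSet η ×ˢ ({(1:ℝ)} : Set ℝ) with hSC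
    have hcwaA : ContinuousWithinAt bdry SA p := by
      by_cases hpA : p ∈ SA
      · have hmemp : sweep a r p.1 p.2 ∈ Kset η c K (ℓ:ℤ) := by
          rw [hSA, Set.mem_prod] at hpA
          exact hsweepK _ _ hpA.1.2
        have hcomp : ContinuousWithinAt (fun q : Euc m × ℝ => u (sweep a r q.1 q.2)) SA p := by
          apply ContinuousWithinAt.comp (g := u)
            (f := fun q : Euc m × ℝ => sweep a r q.1 q.2) (t := Kset η c K (ℓ:ℤ))
            (hu _ hmemp) ((sweep_continuous a r).continuousWithinAt)
          intro q hq
          rw [hSA, Set.mem_prod] at hq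
          exact hsweepK _ _ hq.1.2
        apply hcomp.congr
        · intro q hq
          rw [hSA, Set.mem_prod] at hq
          exact hbdry_low q hq.1.2
        · rw [hSA, Set.mem_prod] at hpA
          exact hbdry_low p hpA.1.2
      · apply continuousWithinAt_of_notMem_closure
        rwa [IsClosed.closure_eq]
        exact ((toSet_isClosed η G).inter (Kset_isClosed hη hX _)).prod isClosed_Icc
    have hcwaB : ContinuousWithinAt bdry SB p := by
      by_cases hpB : p ∈ SB
      · have hpmem : p.1 ∈ Kset η c K (ℓ:ℤ) := by
          rw [hSB, Set.mem_prod] at hpB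
          exact face_toSet_subset_Kset hK (le_of_lt hη) hG hpB.1
        have hcomp : ContinuousWithinAt (fun q : Euc m × ℝ => u q.1) SB p := by
          apply ContinuousWithinAt.comp (g := u)
            (f := fun q : Euc m × ℝ => q.1) (t := Kset η c K (ℓ:ℤ))
            (hu _ hpmem) continuous_fst.continuousWithinAt
          intro q hq
          rw [hSB, Set.mem_prod] at hq
          exact face_toSet_subset_Kset hK (le_of_lt hη) hG hq.1
        apply hcomp.congr
        · intro q hq
          rw [hSB, Set.mem_prod] at hq
          exact hbdry_zero q (face_toSet_subset_X hK (le_of_lt hη) hG hq.1) hq.2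
        · rw [hSB, Set.mem_prod] at hpB
          exact hbdry_zero p (face_toSet_subset_X hK (le_of_lt hη) hG hpB.1) hpB.2
      · apply continuousWithinAt_of_notMem_closure
        rwa [IsClosed.closure_eq]
        exact (toSet_isClosed η G).prod isClosed_singleton
    have hcwaC : ContinuousWithinAt bdry SC p := by
      by_cases hpC : p ∈ SC
      · apply continuousWithinAt_const.congr
        · intro q hq
          rw [hSC, Set.mem_prod] at hq
          exact hbdry_one q (face_toSet_subset_X hK (le_of_lt hη) hG hq.1) hq.2
        · rw [hSC, Set.mem_prod] at hpC
          exact hbdry_one p (face_toSet_subset_X hK (le_of_lt hη) hG hpC.1) hpC.2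
      · apply continuousWithinAt_of_notMem_closure
        rwa [IsClosed.closure_eq]
        exact (toSet_isClosed η G).prod isClosed_singleton
    rw [hΓ]
    exact (hcwaA.union hcwaB).union hcwaC
  -- the filled cylinder for each face
  have hfill : ∀ G : GridFace m, ∃ fill : Euc m × ℝ → Euc ν,
      G ∈ skelFaces η K ℓ →
      ContinuousOn fill (G.toSet η ×ˢ Icc (0:ℝ) 1) ∧
      (∀ p ∈ G.toSet η ×ˢ Icc (0:ℝ) 1, fill p ∈ N) ∧
      (∀ p ∈ Γ G, fill p = bdry p) := by
    intro G
    by_cases hG : G ∈ skelFaces η K ℓ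
    swap
    · exact ⟨fun _ => y₀, fun h => absurd h hG⟩
    have k1 : 0 < ℓ+1 := Nat.succ_pos ℓ
    set g : Euc (ℓ+1) → Euc ν :=
      fun w => bdry (chartInv η G hG.1 (ballToCube k1 w)) with hg
    have hΓmem : ∀ w : Euc (ℓ+1), supn k1 w = 1 → chartInv η G hG.1 w ∈ Γ G := by
      intro w hw
      obtain ⟨hw1, hw2⟩ := chartInv_mem hη G hG.1 (le_of_eq hw)
      have hsup : supn k1 (chart η G hG.1 (chartInv η G hG.1 w)) = 1 := by
        rw [chart_chartInv (ne_of_gt hη) G hG.1 w]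
        exact hw
      rcases supn_chart_boundary hK hη hG hw1 hsup with hlow | h0 | h1
      · rw [hΓ]
        left; left
        exact Set.mem_prod.mpr ⟨⟨hw1, hlow⟩, hw2⟩
      · rw [hΓ]
        left; right
        exact Set.mem_prod.mpr ⟨hw1, h0⟩
      · rw [hΓ]
        right
        exact Set.mem_prod.mpr ⟨hw1, h1⟩
    have hsphmaps : MapsTo (fun w => chartInv η G hG.1 (ballToCube k1 w))
        (sphere (0 : Euc (ℓ+1)) 1) (Γ G) := by
      intro w hw
      exact hΓmem _ (ballToCube_supn_of_sphere k1 hw)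
    have hgcont : ContinuousOn g (sphere (0 : Euc (ℓ+1)) 1) := by
      apply ContinuousOn.comp (hcontΓ G hG)
      · exact ((chartInv_continuous η G hG.1).comp (ballToCube_continuous k1)).continuousOn
      · exact hsphmaps
    have hgmaps : MapsTo g (sphere (0 : Euc (ℓ+1)) 1) N := by
      intro w hw
      have hmem := hsphmaps hw
      apply hbdry_mem
      have h1 : (chartInv η G hG.1 (ballToCube k1 w)).1 ∈ G.toSet η :=
        (chartInv_mem hη G hG.1 (le_of_eq (ballToCube_supn_of_sphere k1 hw))).1
      exact face_toSet_subset_Kset hK (le_of_lt hη) hG h1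
    obtain ⟨Fe, hFcont, hFmaps, hFeq⟩ := hπ g hgcont hgmaps
    refine ⟨fun p => Fe (cubeToBall k1 (chart η G hG.1 p)), fun _ => ⟨?_, ?_, ?_⟩⟩
    · apply ContinuousOn.comp hFcont
      · exact ((cubeToBall_continuous k1).comp (chart_continuous η G hG.1)).continuousOn
      · intro p hp
        rw [Set.mem_prod] at hp
        exact cubeToBall_mem_closedBall k1 (supn_chart_le hη G hG.1 hp.1 hp.2)
    · intro p hp
      rw [Set.mem_prod] at hp
      exact hFmaps (cubeToBall_mem_closedBall k1 (supn_chart_le hη G hG.1 hp.1 hp.2))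
    · intro p hp
      -- p is in the boundary: chart has sup-norm 1
      have hp1 : p.1 ∈ G.toSet η := by
        rw [hΓ] at hp
        rcases hp with (h | h) | h
        · exact (Set.mem_prod.mp h).1.1
        · exact (Set.mem_prod.mp h).1
        · exact (Set.mem_prod.mp h).1
      have hsup1 : supn k1 (chart η G hG.1 p) = 1 := by
        rw [hΓ] at hp
        rcases hp with (h | h) | h
        · rw [Set.mem_prod] at h
          exact supn_chart_eq_one_of_lower hK hη hG hp1 h.1.2 h.2
        · rw [Set.mem_prod] at h
          exact supn_chart_eq_one_of_time hK hη G hG.1 hp1 (Or.inl h.2)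
        · rw [Set.mem_prod] at h
          exact supn_chart_eq_one_of_time hK hη G hG.1 hp1 (Or.inr h.2)
      have hsph : cubeToBall k1 (chart η G hG.1 p) ∈ sphere (0 : Euc (ℓ+1)) 1 :=
        cubeToBall_mem_sphere k1 hsup1
      show Fe (cubeToBall k1 (chart η G hG.1 p)) = bdry p
      rw [hFeq hsph]
      simp only [hg]
      rw [ballToCube_cubeToBall k1 (chart η G hG.1 p),
        chartInv_chart (ne_of_gt hη) G hG.1 hp1]
  choose fill hfillspec using hfill
  -- the global map
  set H : Euc m × ℝ → Euc ν := fun p =>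
    if p.1 ∈ Kset η c K ((ℓ:ℤ)-1) then u (sweep a r p.1 p.2)
    else if hex : ∃ G, G ∈ skelFaces η K ℓ ∧ p.1 ∈ G.toSet η then fill hex.choose p
    else y₀ with hH
  have hlowval : ∀ p : Euc m × ℝ, p.1 ∈ Kset η c K ((ℓ:ℤ)-1) →
      H p = u (sweep a r p.1 p.2) := by
    intro p hp
    rw [hH]; simp only [if_pos hp]
  -- pointwise identification on each face
  have key : ∀ (G : GridFace m), G ∈ skelFaces η K ℓ → ∀ p : Euc m × ℝ,
      p.1 ∈ G.toSet η → p.2 ∈ Icc (0:ℝ) 1 → H p = fill G p := by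
    intro G hG p hp1 hp2
    by_cases hpL : p.1 ∈ Kset η c K ((ℓ:ℤ)-1)
    · rw [hlowval p hpL, ← hbdry_low p hpL]
      rw [(hfillspec G hG).2.2 p (by
        rw [hΓ]; left; left; exact Set.mem_prod.mpr ⟨⟨hp1, hpL⟩, hp2⟩)]
    · have hex : ∃ G', G' ∈ skelFaces η K ℓ ∧ p.1 ∈ G'.toSet η := ⟨G, hG, hp1⟩
      rw [hH]
      simp only [if_neg hpL, dif_pos hex]
      have hcard : (nonvtx η c p.1).card = ℓ := by
        have hle : ((nonvtx η c p.1).card : ℤ) ≤ (ℓ:ℤ) :=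
          (face_toSet_subset_Kset hK (le_of_lt hη) hG hp1).2
        have hX' : p.1 ∈ skelUnion η K :=
          face_toSet_subset_X hK (le_of_lt hη) hG hp1
        have hgt : ¬ ((nonvtx η c p.1).card : ℤ) ≤ (ℓ:ℤ) - 1 := by
          intro hcon
          exact hpL ⟨hX', hcon⟩
        omega
      have := face_unique hK hη hex.choose_spec.1 hG hex.choose_spec.2 hp1 hcard
      rw [this]
  refine ⟨H, ?_, ?_, ?_, ?_⟩
  · -- continuity
    intro p hp
    rw [Set.mem_prod] at hp
    obtain ⟨hp1, hp2⟩ := hp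
    by_cases hpL : p.1 ∈ Kset η c K ((ℓ:ℤ)-1)
    · obtain ⟨ε, hε, hloc⟩ := locality hK hη hm p.1
      have hfin : {G : GridFace m | G ∈ skelFaces η K ℓ ∧ p.1 ∈ G.toSet η}.Finite :=
        faces_at_finite hK hη ℓ p.1
      set t : Finset (Option (GridFace m)) := insert none (hfin.toFinset.image some) with ht
      set S : Option (GridFace m) → Set (Euc m × ℝ) := fun o =>
        match o with
        | none => (Kset η c K ((ℓ:ℤ)-1)) ×ˢ Icc (0:ℝ) 1
        | some G => G.toSet η ×ˢ Icc (0:ℝ) 1 with hS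
      apply cwa_of_cover (t := t) (S := S) hε
      · rintro q ⟨hqs, hqball⟩
        rw [Set.mem_prod] at hqs
        by_cases hqL : q.1 ∈ Kset η c K ((ℓ:ℤ)-1)
        · exact Set.mem_biUnion (Finset.mem_insert_self _ _)
            (Set.mem_prod.mpr ⟨hqL, hqs.2⟩)
        · obtain ⟨G', hG', hqG'⟩ := Kset_cover hK hη hℓm hqs.1
          have hdq : dist p.1 q.1 < ε := by
            have : dist q.1 p.1 ≤ dist q p := by rw [Prod.dist_eq]; exact le_max_left _ _
            rw [mem_ball] at hqball
            rw [dist_comm]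
            linarith
          have hpG' : p.1 ∈ G'.toSet η := hloc ℓ G' hG' q.1 hqG' hdq
          have hmemt : (some G') ∈ t := by
            rw [ht]
            apply Finset.mem_insert_of_mem
            apply Finset.mem_image_of_mem
            rw [Set.Finite.mem_toFinset]
            exact ⟨hG', hpG'⟩
          exact Set.mem_biUnion hmemt (Set.mem_prod.mpr ⟨hqG', hqs.2⟩)
      · intro o ho
        match o with
        | none =>
            have hmemp : sweep a r p.1 p.2 ∈ Kset η c K (ℓ:ℤ) := hsweepK _ _ hpL
            have hcomp : ContinuousWithinAt (fun q : Euc m × ℝ => u (sweep a r q.1 q.2))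
                ((Kset η c K ((ℓ:ℤ)-1)) ×ˢ Icc (0:ℝ) 1) p := by
              apply ContinuousWithinAt.comp (g := u)
                (f := fun q : Euc m × ℝ => sweep a r q.1 q.2) (t := Kset η c K (ℓ:ℤ))
                (hu _ hmemp) ((sweep_continuous a r).continuousWithinAt)
              intro q hq
              rw [Set.mem_prod] at hq
              exact hsweepK _ _ hq.1
            apply hcomp.congr
            · intro q hq
              rw [Set.mem_prod] at hq
              exact hlowval q hq.1
            · exact hlowval p hpL
        | some G =>
            have hGmem : G ∈ skelFaces η K ℓ ∧ p.1 ∈ G.toSet η := by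
              rw [ht] at ho
              rcases Finset.mem_insert.mp ho with hcon | hmem
              · exact absurd hcon (by simp)
              · obtain ⟨G'', hG'', hGG⟩ := Finset.mem_image.mp hmem
                rw [Set.Finite.mem_toFinset] at hG''
                obtain rfl : G'' = G := by injection hGG
                exact hG''
            apply (((hfillspec G hGmem.1).1) p
              (Set.mem_prod.mpr ⟨hGmem.2, hp2⟩)).congr
            · intro q hq
              rw [Set.mem_prod] at hq
              exact key G hGmem.1 q hq.1 hq.2
            · exact key G hGmem.1 p hGmem.2 hp2
    · have hcard : (nonvtx η c p.1).card = ℓ := by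
        have hle : ((nonvtx η c p.1).card : ℤ) ≤ (ℓ:ℤ) := hp1.2
        have hgt : ¬ ((nonvtx η c p.1).card : ℤ) ≤ (ℓ:ℤ) - 1 := by
          intro hcon
          exact hpL ⟨hp1.1, hcon⟩
        omega
      obtain ⟨G, hG, hp1G⟩ := Kset_cover hK hη hℓm hp1
      obtain ⟨ρ₁, hρ₁, hstay⟩ := stay_nonvtx hη hm c p.1
      obtain ⟨ε, hε, hloc⟩ := locality hK hη hm p.1
      have hρ : 0 < min ρ₁ ε := lt_min hρ₁ hε
      apply cwa_of_cover (t := ({0} : Finset ℕ))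
        (S := fun _ => G.toSet η ×ˢ Icc (0:ℝ) 1) hρ
      · rintro q ⟨hqs, hqball⟩
        rw [Set.mem_prod] at hqs
        have hdq : dist p.1 q.1 < min ρ₁ ε := by
          have : dist q.1 p.1 ≤ dist q p := by rw [Prod.dist_eq]; exact le_max_left _ _
          rw [mem_ball] at hqball
          rw [dist_comm]
          linarith
        obtain ⟨G', hG', hqG'⟩ := Kset_cover hK hη hℓm hqs.1
        have hpG' : p.1 ∈ G'.toSet η :=
          hloc ℓ G' hG' q.1 hqG' (lt_of_lt_of_le hdq (min_le_right _ _))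
        have : G' = G := face_unique hK hη hG' hG hpG' hp1G hcard
        subst this
        exact Set.mem_biUnion (Finset.mem_singleton_self 0)
          (Set.mem_prod.mpr ⟨hqG', hqs.2⟩)
      · intro o _
        apply (((hfillspec G hG).1) p (Set.mem_prod.mpr ⟨hp1G, hp2⟩)).congr
        · intro q hq
          rw [Set.mem_prod] at hq
          exact key G hG q hq.1 hq.2
        · exact key G hG p hp1G hp2
  · -- maps into N
    intro p hp
    rw [Set.mem_prod] at hp
    by_cases hpL : p.1 ∈ Kset η c K ((ℓ:ℤ)-1)
    · rw [hlowval p hpL]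
      exact hu' _ (hsweepK _ _ hpL)
    · obtain ⟨G, hG, hp1G⟩ := Kset_cover hK hη hℓm hp.1
      rw [key G hG p hp1G hp.2]
      exact (hfillspec G hG).2.1 p (Set.mem_prod.mpr ⟨hp1G, hp.2⟩)
  · -- value at time 1
    intro x hx
    by_cases hpL : x ∈ Kset η c K ((ℓ:ℤ)-1)
    · rw [hlowval (x,1) hpL]
      show u (sweep a r x 1) = u corner
      rw [sweep_one hr (hX ▸ hx.1)]
    · obtain ⟨G, hG, hxG⟩ := Kset_cover hK hη hℓm hx
      rw [key G hG (x,1) hxG (by norm_num)]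
      rw [(hfillspec G hG).2.2 (x,1) (by
        rw [hΓ]; right; exact Set.mem_prod.mpr ⟨hxG, rfl⟩)]
      exact hbdry_one (x,1) hx.1 rfl
  · -- value at time 0
    intro x hx
    by_cases hpL : x ∈ Kset η c K ((ℓ:ℤ)-1)
    · rw [hlowval (x,0) hpL]
      show u (sweep a r x 0) = u x
      rw [sweep_zero hr (hX ▸ hx.1)]
    · obtain ⟨G, hG, hxG⟩ := Kset_cover hK hη hℓm hx
      rw [key G hG (x,0) hxG (by norm_num)]
      rw [(hfillspec G hG).2.2 (x,0) (by
        rw [hΓ]; left; right; exact Set.mem_prod.mpr ⟨hxG, rfl⟩)]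
      exact hbdry_zero (x,0) hx.1 rfl

end Part9


/-! ### Part 10: assembly -/

section Part10

variable {m ℓ : ℕ} {η : ℝ} {c : Euc m} {K : Set (GridFace m)} {ν : ℕ}

theorem full_extension (hη : 0 < η) (hm : 0 < m) (hK : IsSubskeleton c η m K)
    {a : Euc m} {r : ℝ} (hX : skelUnion η K = cubeC a r) (hr : 0 ≤ r)
    (hcor : ∀ i, a i - r ∈ vlvl η (c i)) (hℓm : ℓ ≤ m)
    {N : Set (Euc ν)} (hπ : PiTrivial ℓ N)
    (u : Euc m → Euc ν)
    (hu : ContinuousOn u (Kset η c K (ℓ:ℤ)))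
    (hu' : ∀ x ∈ Kset η c K (ℓ:ℤ), u x ∈ N) :
    ∃ f : Euc m → Euc ν,
      ContinuousOn f (skelUnion η K) ∧
      (∀ x ∈ skelUnion η K, f x ∈ N) ∧
      (∀ x ∈ Kset η c K (ℓ:ℤ), f x = u x) := by
  set y₀ := u (WithLp.toLp 2 (fun i => a i - r)) with hy₀
  have hy₀N : y₀ ∈ N := by
    apply hu'
    constructor
    · rw [hX]
      intro i
      rw [show (WithLp.toLp 2 (fun i => a i - r) : Euc m) i - a i = -r from by simp, abs_neg,
        abs_of_nonneg hr]
    · have hempty : nonvtx η c (WithLp.toLp 2 (fun i => a i - r) : Euc m) = ∅ := by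
        apply Finset.eq_empty_of_forall_notMem
        intro i hi
        exact (mem_nonvtx.mp hi) (hcor i)
      rw [hempty]
      simp
  have main : ∀ j : ℕ, ℓ + j ≤ m →
      ∃ H : Euc m × ℝ → Euc ν,
        ContinuousOn H ((Kset η c K ((ℓ+j : ℕ):ℤ)) ×ˢ Icc (0:ℝ) 1) ∧
        (∀ p ∈ (Kset η c K ((ℓ+j : ℕ):ℤ)) ×ˢ Icc (0:ℝ) 1, H p ∈ N) ∧
        (∀ x ∈ Kset η c K ((ℓ+j : ℕ):ℤ), H (x, 1) = y₀) ∧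
        (∀ x ∈ Kset η c K (ℓ:ℤ), H (x, 0) = u x) := by
    intro j
    induction j with
    | zero =>
        intro _
        obtain ⟨H, h1, h2, h3, h4⟩ := base_case hη hm hK hX hr hcor hℓm hπ u hu hu'
        exact ⟨H, by simpa using h1, by simpa using h2, by simpa using h3, h4⟩
    | succ j ih =>
        intro hjm
        obtain ⟨H, h1, h2, h3, h4⟩ := ih (by omega)
        have hcast : ((ℓ+(j+1) : ℕ):ℤ) - 1 = ((ℓ+j : ℕ):ℤ) := by push_cast; ring
        obtain ⟨H', h1', h2', h3', h5'⟩ := step_extend hK hη hm hX hy₀N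
          (show 1 ≤ ℓ+(j+1) by omega) (show ℓ+(j+1) ≤ m by omega) H
          (by rw [hcast]; exact h1) (by rw [hcast]; exact h2) (by rw [hcast]; exact h3)
        refine ⟨H', h1', h2', h3', ?_⟩
        intro x hx
        have hxlow : x ∈ Kset η c K (((ℓ+(j+1) : ℕ):ℤ) - 1) := by
          rw [hcast]
          exact Kset_mono (by push_cast; omega) hx
        rw [h5' (x, 0) hxlow]
        exact h4 x hx
  obtain ⟨H, h1, h2, h3, h4⟩ := main (m - ℓ) (by omega)
  have hml : ℓ + (m - ℓ) = m := by omega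
  rw [hml] at h1 h2
  refine ⟨fun x => H (x, 0), ?_, ?_, ?_⟩
  · intro x hx
    have hxm : x ∈ Kset η c K (m:ℤ) := mem_Kset_top hx
    have hcomp : ContinuousWithinAt (fun x : Euc m => H (x, 0)) (Kset η c K (m:ℤ)) x := by
      apply ContinuousWithinAt.comp (g := H) (f := fun x : Euc m => (x, (0:ℝ)))
        (t := (Kset η c K (m:ℤ)) ×ˢ Icc (0:ℝ) 1)
      · exact h1 (x, 0) (Set.mem_prod.mpr ⟨hxm, by norm_num⟩)
      · exact (continuous_id.prodMk continuous_const).continuousWithinAt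
      · intro y hy
        exact Set.mem_prod.mpr ⟨hy, by norm_num⟩
    exact hcomp.mono (fun y hy => mem_Kset_top hy)
  · intro x hx
    exact h2 (x, 0) (Set.mem_prod.mpr ⟨mem_Kset_top hx, by norm_num⟩)
  · exact h4

end Part10

end CEP

/-- continuous extension property: let `K^m` be a cubication of radius `η`
whose underlying set is a cube. If `π_ℓ(N)` is trivial, then every continuous map
`u : K^ℓ → N` on the `ℓ`-dimensional skeleton has a continuous extension `f : K^m → N`. -/
theorem continuous_extension_property
    (m n ν ℓ : ℕ) (hm : 1 ≤ m) (hℓ : ℓ ≤ m - 1)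
    (η : ℝ) (hη : 0 < η) (c : Euc m) (K : Set (GridFace m)) (hK : IsSubskeleton c η m K)
    (hKcube : ∃ (a : Euc m) (r : ℝ), skelUnion η K = cubeC a r)
    (N : Set (Euc ν)) (hNne : N.Nonempty) (hNcpt : IsCompact N)
    (hNman : IsSmoothSubmanifold n N)
    (hπ : PiTrivial ℓ N)
    (u : Euc m → Euc ν)
    (hu : ContinuousOn u (skelUnion η (skelFaces η K ℓ)))
    (hu' : MapsTo u (skelUnion η (skelFaces η K ℓ)) N) :
    ∃ f : Euc m → Euc ν,
      ContinuousOn f (skelUnion η K) ∧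
      MapsTo f (skelUnion η K) N ∧
      EqOn f u (skelUnion η (skelFaces η K ℓ)) := by
  classical
  rcases Set.eq_empty_or_nonempty K with hKe | hKne
  · -- degenerate: empty cubication
    subst hKe
    have hX0 : skelUnion η (∅ : Set (GridFace m)) = ∅ := by
      simp [skelUnion]
    have hF0 : skelFaces η (∅ : Set (GridFace m)) ℓ = ∅ := by
      ext G
      simp [skelFaces]
    refine ⟨fun _ => hNne.some, ?_, ?_, ?_⟩
    · rw [hX0]; exact continuousOn_empty _
    · rw [hX0]; exact mapsTo_empty _ _
    · rw [hF0, hX0]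
      intro x hx
      exact absurd hx (by simp)
  · obtain ⟨a, r, hX⟩ := hKcube
    have hm0 : 0 < m := hm
    have hℓm : ℓ ≤ m := by omega
    obtain ⟨F₀, hF₀⟩ := hKne
    have hXne : (skelUnion η K).Nonempty := by
      refine ⟨F₀.center, ?_⟩
      rw [CEP.mem_skelUnion]
      refine ⟨F₀, hF₀, ?_, ?_⟩
      · intro i _
        rw [sub_self, abs_zero]
        exact le_of_lt hη
      · intro i hi
        rfl
    have hr : 0 ≤ r := by
      obtain ⟨x₀, hx₀⟩ := hXne
      rw [hX] at hx₀
      exact le_trans (abs_nonneg _) (hx₀ ⟨0, hm0⟩)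
    have hcor : ∀ i, a i - r ∈ CEP.vlvl η (c i) :=
      CEP.corner_vlvl hη hm0 hK hX hXne hr
    have hEq : skelUnion η (skelFaces η K ℓ) = CEP.Kset η c K (ℓ:ℤ) :=
      CEP.skelUnion_skelFaces_eq_Kset hK hη hℓm
    rw [hEq] at hu hu'
    obtain ⟨f, hf1, hf2, hf3⟩ := CEP.full_extension hη hm0 hK hX hr hcor hℓm hπ u hu
      (fun x hx => hu' hx)
    refine ⟨f, hf1, fun x hx => hf2 x hx, ?_⟩
    rw [hEq]
    intro x hx
    exact hf3 x hx
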